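/- arXiv:2503.06804 — 8 statements merged into one kernel-verified Lean document; each statement's English description precedes it below -/
import Mathlib

section
/- If Y ~ N(m, q) with q > 0, then E[(max(Y - x̄, 0))²] = ((m - x̄)² + q) Φ((m - x̄)/√q) + (m - x̄) √(q/(2π)) exp(-(m - x̄)²/(2q)). -/
open Real MeasureTheory ProbabilityTheory NNReal

/-- Standard normal CDF. -/
noncomputable def stdNormalCDF (t : ℝ) : ℝ :=
  ∫ y in Set.Iic t, (Real.sqrt (2 * Real.pi))⁻¹ * Real.exp (-(y ^ 2) / 2)

namespace GaussHelper

open Filter Set Topology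

/-- Standard normal density. -/
noncomputable def φ (z : ℝ) : ℝ := (Real.sqrt (2 * Real.pi))⁻¹ * Real.exp (-(z ^ 2) / 2)

lemma φ_eq (z : ℝ) : φ z = (Real.sqrt (2 * Real.pi))⁻¹ * Real.exp (-(1/2) * z ^ 2) := by
  rw [φ]; ring_nf

lemma φ_cont : Continuous φ := by
  unfold φ; fun_prop

lemma φ_even (z : ℝ) : φ (-z) = φ z := by simp [φ]

lemma φ_int : Integrable φ := by
  have h := (integrable_exp_neg_mul_sq (by norm_num : (0:ℝ) < 1/2)).const_mul
    (Real.sqrt (2 * Real.pi))⁻¹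
  exact h.congr (Filter.Eventually.of_forall fun z => (φ_eq z).symm)

lemma φ_total : ∫ z, φ z = 1 := by
  simp_rw [φ_eq]
  rw [integral_const_mul, integral_gaussian, show Real.pi / (1/2) = 2 * Real.pi by ring,
    inv_mul_cancel₀ (Real.sqrt_pos.mpr (by positivity)).ne']

lemma φ_deriv (z : ℝ) : HasDerivAt φ (-z * φ z) z := by
  have h1 : HasDerivAt (fun z : ℝ => -(z ^ 2) / 2) (-z) z := by
    have h := (hasDerivAt_pow 2 z).neg.div_const 2
    refine h.congr_deriv ?_
    push_cast; ring
  have h2 := (h1.exp).const_mul (Real.sqrt (2 * Real.pi))⁻¹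
  refine h2.congr_deriv ?_
  unfold φ; ring

lemma cdf_eq (t : ℝ) : stdNormalCDF t = ∫ z in Set.Iic t, φ z := rfl

lemma cdf_sub (b t : ℝ) : stdNormalCDF t = stdNormalCDF b + ∫ z in b..t, φ z := by
  rw [cdf_eq, cdf_eq, ← intervalIntegral.integral_Iic_sub_Iic φ_int.integrableOn
    φ_int.integrableOn]
  ring

lemma cdf_hasDeriv (t : ℝ) : HasDerivAt stdNormalCDF (φ t) t := by
  have h : stdNormalCDF = fun t => stdNormalCDF 0 + ∫ z in (0:ℝ)..t, φ z :=
    funext fun t => cdf_sub 0 t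
  rw [h]
  exact (intervalIntegral.integral_hasDerivAt_right φ_int.intervalIntegrable
    (φ_cont.stronglyMeasurableAtFilter _ _) φ_cont.continuousAt).const_add _

lemma cdf_tendsto : Tendsto stdNormalCDF atTop (𝓝 1) := by
  have h : Tendsto (fun t => stdNormalCDF 0 + ∫ z in (0:ℝ)..t, φ z) atTop
      (𝓝 (stdNormalCDF 0 + ∫ z in Set.Ioi (0:ℝ), φ z)) :=
    tendsto_const_nhds.add
      (intervalIntegral_tendsto_integral_Ioi 0 φ_int.integrableOn tendsto_id)
  have he : stdNormalCDF 0 + ∫ z in Set.Ioi (0:ℝ), φ z = 1 := by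
    rw [cdf_eq, intervalIntegral.integral_Iic_add_Ioi φ_int.integrableOn φ_int.integrableOn,
      φ_total]
  rw [← he]
  exact h.congr fun t => (cdf_sub 0 t).symm

lemma cdf_Ioi (t : ℝ) : ∫ z in Set.Ioi (-t), φ z = stdNormalCDF t := by
  rw [cdf_eq]
  have := integral_comp_neg_Ioi (-t) φ
  rw [neg_neg] at this
  rw [← this]
  simp_rw [φ_even]

lemma cdf_add_neg (t : ℝ) : stdNormalCDF (-t) + stdNormalCDF t = 1 := by
  rw [← cdf_Ioi t, cdf_eq, intervalIntegral.integral_Iic_add_Ioi φ_int.integrableOn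
    φ_int.integrableOn, φ_total]

lemma id_φ_int : Integrable (fun z => z * φ z) := by
  have h := (integrable_mul_exp_neg_mul_sq (by norm_num : (0:ℝ) < 1/2)).const_mul
    (Real.sqrt (2 * Real.pi))⁻¹
  exact h.congr (Filter.Eventually.of_forall fun z => by simp only [φ_eq]; ring)

lemma sq_φ_int : Integrable (fun z => z ^ 2 * φ z) := by
  have h := (integrable_rpow_mul_exp_neg_mul_sq (by norm_num : (0:ℝ) < 1/2)
    (by norm_num : (-1:ℝ) < 2)).const_mul (Real.sqrt (2 * Real.pi))⁻¹
  refine h.congr (Filter.Eventually.of_forall fun z => ?_)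
  simp only [φ_eq, show (2:ℝ) = ((2:ℕ):ℝ) from by norm_num, Real.rpow_natCast]
  ring

lemma integrand_int (a : ℝ) : Integrable (fun z => (z + a) ^ 2 * φ z) := by
  have h := (sq_φ_int.add (id_φ_int.const_mul (2 * a))).add (φ_int.const_mul (a ^ 2))
  exact h.congr (Filter.Eventually.of_forall fun z => by simp only [Pi.add_apply]; ring)

lemma tendsto_mul_φ : Tendsto (fun z : ℝ => z * φ z) atTop (𝓝 0) := by
  have hsq : Tendsto (fun z : ℝ => z ^ 2) atTop atTop := tendsto_pow_atTop two_ne_zero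
  have h := (tendsto_rpow_mul_exp_neg_mul_atTop_nhds_zero (1/2) (1/2)
    (by norm_num)).comp hsq
  have h' : Tendsto (fun z : ℝ => z * rexp (-(1/2) * z ^ 2)) atTop (𝓝 0) := by
    refine h.congr' ?_
    filter_upwards [eventually_ge_atTop (0:ℝ)] with z hz
    simp only [Function.comp]
    rw [← Real.sqrt_eq_rpow, Real.sqrt_sq hz]
  have h2 := h'.const_mul (Real.sqrt (2 * Real.pi))⁻¹
  rw [mul_zero] at h2
  exact h2.congr fun z => by rw [φ_eq]; ring

lemma tendsto_φ : Tendsto φ atTop (𝓝 0) := by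
  have harg : Tendsto (fun z : ℝ => (1/2) * z ^ 2) atTop atTop :=
    (tendsto_pow_atTop two_ne_zero).const_mul_atTop (by norm_num)
  have h := (Real.tendsto_exp_neg_atTop_nhds_zero.comp harg).const_mul
    (Real.sqrt (2 * Real.pi))⁻¹
  rw [mul_zero] at h
  exact h.congr fun z => by simp only [Function.comp]; rw [φ_eq]; ring_nf

lemma key (a : ℝ) :
    ∫ z in Set.Ioi (-a), (z + a) ^ 2 * φ z = (1 + a ^ 2) * stdNormalCDF a + a * φ a := by
  set F : ℝ → ℝ := fun z => -(z + 2 * a) * φ z + (1 + a ^ 2) * stdNormalCDF z with hF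
  have hderiv : ∀ z ∈ Set.Ici (-a), HasDerivAt F ((z + a) ^ 2 * φ z) z := by
    intro z _
    have h1 : HasDerivAt (fun z => -(z + 2 * a) * φ z)
        (-1 * φ z + -(z + 2 * a) * (-z * φ z)) z := by
      have := (((hasDerivAt_id z).add_const (2 * a)).neg).mul (φ_deriv z)
      exact this.congr_deriv rfl
    have h2 := h1.add ((cdf_hasDeriv z).const_mul (1 + a ^ 2))
    refine h2.congr_deriv ?_
    ring
  have htendsF : Tendsto F atTop (𝓝 (0 + (1 + a ^ 2) * 1)) := by
    refine Tendsto.add ?_ (cdf_tendsto.const_mul _)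
    have := (tendsto_mul_φ.add (tendsto_φ.const_mul (2 * a))).neg
    rw [show -((0:ℝ) + 2 * a * 0) = 0 by ring] at this
    exact this.congr fun z => by ring
  have hint := (integrand_int a).integrableOn (s := Set.Ioi (-a))
  have hres := integral_Ioi_of_hasDerivAt_of_tendsto' hderiv hint htendsF
  rw [hres, hF]
  have hs := cdf_add_neg a
  have he := φ_even a
  simp only []
  linear_combination (-(1 + a ^ 2)) * hs + a * he

lemma split (a : ℝ) :
    ∫ z, max (z + a) 0 ^ 2 * φ z = ∫ z in Set.Ioi (-a), (z + a) ^ 2 * φ z := by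
  have hmeas : AEStronglyMeasurable (fun z => max (z + a) 0 ^ 2 * φ z) volume := by
    apply Continuous.aestronglyMeasurable
    exact (((continuous_id.add continuous_const).max continuous_const).pow 2).mul φ_cont
  have hint : Integrable (fun z => max (z + a) 0 ^ 2 * φ z) := by
    refine (integrand_int a).mono' hmeas ?_
    refine Filter.Eventually.of_forall fun z => ?_
    have hφ : 0 ≤ φ z := by rw [φ_eq]; positivity
    rw [Real.norm_eq_abs, abs_mul, abs_of_nonneg hφ, abs_of_nonneg (by positivity)]
    rcases le_or_gt (z + a) 0 with h | h
    · rw [max_eq_right h]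
      nlinarith
    · rw [max_eq_left h.le]
  rw [← intervalIntegral.integral_Iic_add_Ioi (b := -a) hint.integrableOn hint.integrableOn]
  have h0 : ∫ z in Set.Iic (-a), max (z + a) 0 ^ 2 * φ z = 0 := by
    rw [setIntegral_congr_fun measurableSet_Iic (g := fun _ => (0:ℝ))]
    · simp
    · intro z hz
      have : z + a ≤ 0 := by simp only [mem_Iic] at hz; linarith
      simp [max_eq_right this]
  have h1 : ∫ z in Set.Ioi (-a), max (z + a) 0 ^ 2 * φ z
      = ∫ z in Set.Ioi (-a), (z + a) ^ 2 * φ z := by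
    refine setIntegral_congr_fun measurableSet_Ioi fun z hz => ?_
    have : 0 ≤ z + a := by simp at hz; linarith
    rw [max_eq_left this]
  rw [h0, h1, zero_add]

lemma split_key (a : ℝ) :
    ∫ z, max (z + a) 0 ^ 2 * φ z = (1 + a ^ 2) * stdNormalCDF a + a * φ a := by
  rw [split, key]

end GaussHelper

open GaussHelper

/-- Expected squared positive part of `Y - x̄` for `Y ~ N(m, q)`, `q > 0`. -/
theorem expectation_sq_pos_part_gaussian
    {Ω : Type*} [MeasureSpace Ω] (P : Measure Ω) [IsProbabilityMeasure P]
    (Y : Ω → ℝ) (m : ℝ) (q : ℝ≥0) (hq : 0 < q) (xbar : ℝ)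
    (hY : P.map Y = gaussianReal m q) :
    (∫ ω, (max (Y ω - xbar) 0) ^ 2 ∂P) =
      ((m - xbar) ^ 2 + (q : ℝ)) * stdNormalCDF ((m - xbar) / Real.sqrt q)
        + (m - xbar) * Real.sqrt ((q : ℝ) / (2 * Real.pi)) *
          Real.exp (-((m - xbar) ^ 2) / (2 * (q : ℝ))) := by
  have hq' : (0:ℝ) < q := hq
  set c : ℝ := Real.sqrt q with hc
  have hcpos : 0 < c := Real.sqrt_pos.mpr hq'
  have hcsq : c ^ 2 = (q:ℝ) := Real.sq_sqrt hq'.le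
  set a : ℝ := (m - xbar) / c with ha
  have hne : NeZero (P.map Y) := by rw [hY]; infer_instance
  have hYm : AEMeasurable Y P := aemeasurable_of_map_neZero hne
  set g : ℝ → ℝ := fun x => max (x - xbar) 0 ^ 2 with hg
  have hgm : AEStronglyMeasurable g (P.map Y) :=
    (((continuous_id.sub continuous_const).max continuous_const).pow 2).aestronglyMeasurable
  have h1 : (∫ ω, (max (Y ω - xbar) 0) ^ 2 ∂P) = ∫ x, g x ∂(gaussianReal m q) := by
    rw [← hY, integral_map hYm hgm]
  rw [h1]
  have h2 : ∫ x, g x ∂(gaussianReal m q) = ∫ x, gaussianPDFReal m q x * g x := by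
    rw [gaussianReal_of_var_ne_zero _ hq.ne']
    have hmeas : Measurable fun x => Real.toNNReal (gaussianPDFReal m q x) :=
      (measurable_gaussianPDFReal m q).real_toNNReal
    rw [show gaussianPDF m q = fun x => ((Real.toNNReal (gaussianPDFReal m q x) : ℝ≥0) : ENNReal)
      from rfl, integral_withDensity_eq_integral_smul hmeas g]
    congr 1
    funext x
    rw [NNReal.smul_def, smul_eq_mul, Real.coe_toNNReal _ (gaussianPDFReal_nonneg m q x)]
  rw [h2]
  set H : ℝ → ℝ := fun x => gaussianPDFReal m q x * g x with hH
  have h3 : ∫ x, H x = c * ∫ z, H (c * z + m) := by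
    rw [show (fun z => H (c * z + m)) = (fun z => (fun x => H (x + m)) (c * z)) from rfl,
      MeasureTheory.Measure.integral_comp_mul_left (fun x => H (x + m)) c,
      integral_add_right_eq_self (fun x => H x) m,
      abs_of_pos (inv_pos.mpr hcpos), smul_eq_mul]
    field_simp
  have h4 : ∀ z : ℝ, H (c * z + m) = (q : ℝ) * c⁻¹ * (max (z + a) 0 ^ 2 * φ z) := by
    intro z
    have hpdf : gaussianPDFReal m q (c * z + m) = c⁻¹ * φ z := by
      unfold gaussianPDFReal φ
      rw [show c * z + m - m = c * z by ring,
        show (c * z) ^ 2 = (q:ℝ) * z ^ 2 by rw [mul_pow, hcsq],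
        show -((q:ℝ) * z ^ 2) / (2 * (q:ℝ)) = -(z ^ 2) / 2 by field_simp,
        show 2 * Real.pi * (q:ℝ) = (2 * Real.pi) * (q:ℝ) by ring,
        Real.sqrt_mul (by positivity) (q:ℝ), mul_inv]
      rw [← hc]
      ring
    have hmax : g (c * z + m) = (q : ℝ) * max (z + a) 0 ^ 2 := by
      rw [hg]
      simp only []
      have h5 : c * z + m - xbar = c * (z + a) := by
        rw [ha]; field_simp; ring
      have hmax0 : max (c * (z + a)) 0 = c * max (z + a) 0 := by
        rw [mul_max_of_nonneg _ _ hcpos.le, mul_zero]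
      rw [h5, hmax0, mul_pow, hcsq]
    rw [hH]
    simp only []
    rw [hpdf, hmax]
    ring
  rw [h3]
  simp_rw [h4]
  rw [integral_const_mul, split_key a]
  have hφa : φ a = (Real.sqrt (2 * Real.pi))⁻¹
      * Real.exp (-((m - xbar) ^ 2) / (2 * (q:ℝ))) := by
    unfold φ
    congr 2
    rw [ha, div_pow, hcsq, neg_div, div_div, mul_comm (q:ℝ) 2, neg_div]
  have hsd : Real.sqrt ((q:ℝ) / (2 * Real.pi)) = c * (Real.sqrt (2 * Real.pi))⁻¹ := by
    rw [Real.sqrt_div hq'.le, ← hc, div_eq_mul_inv]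
  have hcc : c * c⁻¹ = 1 := mul_inv_cancel₀ hcpos.ne'
  have h3' : c * a = m - xbar := by rw [ha]; field_simp
  rw [hφa, hsd]
  linear_combination ((q:ℝ) * ((1 + a ^ 2) * stdNormalCDF a
      + a * ((Real.sqrt (2 * Real.pi))⁻¹
        * Real.exp (-((m - xbar) ^ 2) / (2 * (q:ℝ)))))) * hcc
    + (-(stdNormalCDF a * a ^ 2 + (Real.sqrt (2 * Real.pi))⁻¹
        * Real.exp (-((m - xbar) ^ 2) / (2 * (q:ℝ))) * a)) * hcsq
    + (stdNormalCDF a * (c * a + (m - xbar)) + (Real.sqrt (2 * Real.pi))⁻¹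
        * Real.exp (-((m - xbar) ^ 2) / (2 * (q:ℝ))) * c) * h3'
end

section
/- If Y ~ N(m, q) with q > 0 and a, b ≥ 0, then the expected penalty cost E[a·Y + b·(max(Y - x̄, 0))²] equals a·m + b·[((m - x̄)² + q) Φ((m - x̄)/√q) + (m - x̄) √(q/(2π)) exp(-(m - x̄)²/(2q))]. -/
open Real MeasureTheory ProbabilityTheory NNReal

section helpers
open Set Filter Topology ENNReal

lemma integrable_pow_mul_gauss {b : ℝ} (hb : 0 < b) (k : ℕ) :
    Integrable (fun x : ℝ => x ^ k * Real.exp (-b * x ^ 2)) := by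
  have hk : (-1 : ℝ) < (k : ℝ) :=
    lt_of_lt_of_le (by norm_num) (Nat.cast_nonneg k)
  simpa [Real.rpow_natCast] using integrable_rpow_mul_exp_neg_mul_sq hb hk

lemma integrable_poly_mul_gauss {b : ℝ} (hb : 0 < b) (p2 p1 p0 d : ℝ) :
    Integrable (fun x : ℝ => (p2 * x ^ 2 + p1 * x + p0) * Real.exp (-b * (x - d) ^ 2)) := by
  have h0 := (integrable_pow_mul_gauss hb 0).const_mul (p2 * d ^ 2 + p1 * d + p0)
  have h1 := (integrable_pow_mul_gauss hb 1).const_mul (2 * p2 * d + p1)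
  have h2 := (integrable_pow_mul_gauss hb 2).const_mul p2
  have hsum := (h2.add h1).add h0
  have hsum' : Integrable (fun x : ℝ => (p2 * (x + d) ^ 2 + p1 * (x + d) + p0)
      * Real.exp (-b * x ^ 2)) := by
    refine hsum.congr (Eventually.of_forall fun x => ?_)
    simp only [Pi.add_apply, pow_zero, pow_one, one_mul]
    ring
  have := hsum'.comp_sub_right d
  refine this.congr (Eventually.of_forall fun x => ?_)
  simp [sub_add_cancel]

lemma tendsto_linear_mul_gauss (A B d : ℝ) {b : ℝ} (hb : 0 < b) :
    Tendsto (fun x : ℝ => (A * x + B) * Real.exp (-b * (x - d) ^ 2)) atTop (𝓝 0) := by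
  have hexp : Tendsto (fun u : ℝ => Real.exp (-b * u ^ 2)) atTop (𝓝 0) := by
    have h1 : Tendsto (fun u : ℝ => b * u ^ 2) atTop atTop :=
      (tendsto_pow_atTop two_ne_zero).const_mul_atTop hb
    have := Real.tendsto_exp_atBot.comp (tendsto_neg_atTop_atBot.comp h1)
    refine this.congr fun u => ?_
    simp [Function.comp, neg_mul]
  have hT1 : Tendsto (fun u : ℝ => u * Real.exp (-b * u ^ 2)) atTop (𝓝 0) := by
    have hlo := rpow_mul_exp_neg_mul_sq_isLittleO_exp_neg hb 1
    have hlim : Tendsto (fun x : ℝ => Real.exp (-(1 / 2) * x)) atTop (𝓝 0) := by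
      have h1 : Tendsto (fun x : ℝ => (1 / 2 : ℝ) * x) atTop atTop :=
        tendsto_id.const_mul_atTop (by norm_num)
      have := Real.tendsto_exp_atBot.comp (tendsto_neg_atTop_atBot.comp h1)
      refine this.congr fun u => ?_
      simp [Function.comp, neg_mul]
    have := hlo.trans_tendsto hlim
    refine this.congr fun u => ?_
    rw [Real.rpow_one]
  have houter : Tendsto (fun u : ℝ => (A * u + (A * d + B)) * Real.exp (-b * u ^ 2))
      atTop (𝓝 0) := by
    have := (hT1.const_mul A).add (hexp.const_mul (A * d + B))
    simp only [mul_zero, add_zero] at this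
    refine this.congr fun u => ?_
    ring
  have hcomp : Tendsto (fun x : ℝ => x - d) atTop atTop :=
    tendsto_atTop_add_const_right atTop (-d) tendsto_id
  have := houter.comp hcomp
  refine this.congr fun x => ?_
  simp only [Function.comp]
  ring_nf

variable {μ : ℝ} {v : ℝ≥0} (hv : 0 < v)

lemma pdf_eq (x : ℝ) : gaussianPDFReal μ v x
    = (Real.sqrt (2 * π * v))⁻¹ * Real.exp (-((2 * (v:ℝ))⁻¹) * (x - μ) ^ 2) := by
  rw [gaussianPDFReal]
  congr 2
  push_cast
  rw [neg_div, div_eq_inv_mul, neg_mul]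

include hv

lemma integrable_poly_mul_pdf (p2 p1 p0 : ℝ) :
    Integrable (fun x : ℝ => (p2 * x ^ 2 + p1 * x + p0) * gaussianPDFReal μ v x) := by
  have hb : (0 : ℝ) < (2 * (v:ℝ))⁻¹ := by positivity
  have := (integrable_poly_mul_gauss hb p2 p1 p0 μ).const_mul (Real.sqrt (2 * π * v))⁻¹
  refine this.congr (Eventually.of_forall fun x => ?_)
  simp only [pdf_eq]
  ring

lemma integral_pdf_Ioi (t : ℝ) :
    ∫ x in Ioi t, gaussianPDFReal μ v x = stdNormalCDF ((μ - t) / Real.sqrt v) := by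
  have hV : (0 : ℝ) < (v : ℝ) := by exact_mod_cast hv
  set s : ℝ := Real.sqrt v with hs
  have hs0 : 0 < s := Real.sqrt_pos.mpr hV
  have hs2 : s ^ 2 = (v : ℝ) := Real.sq_sqrt hV.le
  set u : ℝ := (t - μ) / s with hu
  -- change of variables: x ↦ s * x + μ
  have step1 : ∫ x in Ioi u, gaussianPDFReal μ v (s * x + μ)
      = s⁻¹ • ∫ y in Ioi (s * u), gaussianPDFReal μ v (y + μ) := by
    exact integral_comp_mul_left_Ioi (fun y => gaussianPDFReal μ v (y + μ)) u hs0
  have step2 : ∫ y in Ioi (s * u), gaussianPDFReal μ v (y + μ)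
      = ∫ z in Ioi (s * u + μ), gaussianPDFReal μ v z := by
    have hmp : MeasurePreserving (fun y : ℝ => y + μ) volume volume :=
      measurePreserving_add_right (volume : Measure ℝ) μ
    have hemb : MeasurableEmbedding (fun y : ℝ => y + μ) :=
      (MeasurableEquiv.addRight μ).measurableEmbedding
    have := hmp.setIntegral_preimage_emb hemb (gaussianPDFReal μ v) (Ioi (s * u + μ))
    rw [← this]
    congr 1
    ext y
    simp [Set.mem_preimage]
  have hsu : s * u + μ = t := by
    rw [hu, mul_div_cancel₀ _ hs0.ne']
    ring
  have key : ∫ x in Ioi t, gaussianPDFReal μ v x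
      = s • ∫ x in Ioi u, gaussianPDFReal μ v (s * x + μ) := by
    rw [step1, step2, hsu, smul_smul, mul_inv_cancel₀ hs0.ne', one_smul]
  -- simplify the integrand
  have hpdf : ∀ x : ℝ, s * gaussianPDFReal μ v (s * x + μ)
      = (Real.sqrt (2 * π))⁻¹ * Real.exp (-(x ^ 2) / 2) := by
    intro x
    rw [gaussianPDFReal]
    have h1 : (s * x + μ - μ) ^ 2 = (v : ℝ) * x ^ 2 := by
      rw [add_sub_cancel_right, mul_pow, hs2]
    have h2 : Real.sqrt (2 * π * v) = Real.sqrt (2 * π) * s := by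
      rw [hs, ← Real.sqrt_mul (by positivity)]
    rw [h1, h2]
    have h3 : -((v : ℝ) * x ^ 2) / (2 * v) = -(x ^ 2) / 2 := by
      field_simp
    rw [h3, mul_inv]
    have : s * ((Real.sqrt (2 * π))⁻¹ * s⁻¹ * Real.exp (-(x ^ 2) / 2))
        = (s * s⁻¹) * ((Real.sqrt (2 * π))⁻¹ * Real.exp (-(x ^ 2) / 2)) := by ring
    rw [this, mul_inv_cancel₀ hs0.ne', one_mul]
  rw [key, smul_eq_mul, ← integral_const_mul]
  have : ∫ x in Ioi u, s * gaussianPDFReal μ v (s * x + μ)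
      = ∫ x in Ioi u, (Real.sqrt (2 * π))⁻¹ * Real.exp (-(x ^ 2) / 2) := by
    exact setIntegral_congr_fun measurableSet_Ioi fun x _ => hpdf x
  rw [this]
  -- reflection
  have hrefl := integral_comp_neg_Ioi u (fun x => (Real.sqrt (2 * π))⁻¹ * Real.exp (-(x ^ 2) / 2))
  simp only [neg_sq] at hrefl
  rw [stdNormalCDF, show (μ - t) / s = -u by rw [hu]; ring, ← hrefl]

lemma integral_id_pdf : ∫ x : ℝ, x * gaussianPDFReal μ v x = μ := by
  have hV : (0 : ℝ) < (v : ℝ) := by exact_mod_cast hv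
  have hsplit : ∀ x : ℝ, x * gaussianPDFReal μ v x
      = (x - μ) * gaussianPDFReal μ v x + μ * gaussianPDFReal μ v x := by
    intro x; ring
  have hint1 : Integrable (fun x : ℝ => (x - μ) * gaussianPDFReal μ v x) := by
    have := integrable_poly_mul_pdf hv 0 1 (-μ) (μ := μ)
    refine this.congr (Eventually.of_forall fun x => ?_)
    ring
  have hint2 : Integrable (fun x : ℝ => μ * gaussianPDFReal μ v x) :=
    (integrable_gaussianPDFReal μ v).const_mul μ
  calc ∫ x : ℝ, x * gaussianPDFReal μ v x
      = ∫ x : ℝ, ((x - μ) * gaussianPDFReal μ v x + μ * gaussianPDFReal μ v x) := by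
        exact integral_congr_ae (Eventually.of_forall hsplit)
    _ = (∫ x : ℝ, (x - μ) * gaussianPDFReal μ v x) + ∫ x : ℝ, μ * gaussianPDFReal μ v x :=
        integral_add hint1 hint2
    _ = 0 + μ := by
        have hodd : ∫ x : ℝ, (x - μ) * gaussianPDFReal μ v x
            = ∫ x : ℝ, x * ((Real.sqrt (2 * π * (v:ℝ)))⁻¹ * Real.exp (-(x ^ 2) / (2 * (v:ℝ)))) := by
          have := integral_sub_right_eq_self (μ := (volume : Measure ℝ))
            (fun x : ℝ => x * ((Real.sqrt (2 * π * (v:ℝ)))⁻¹ * Real.exp (-(x ^ 2) / (2 * (v:ℝ))))) μ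
          rw [← this]
          refine integral_congr_ae (Eventually.of_forall fun x => ?_)
          simp only [gaussianPDFReal_def]
        have hzero : ∫ x : ℝ, x * ((Real.sqrt (2 * π * (v:ℝ)))⁻¹
            * Real.exp (-(x ^ 2) / (2 * (v:ℝ)))) = 0 := by
          have hneg := integral_neg_eq_self
            (fun x : ℝ => x * ((Real.sqrt (2 * π * (v:ℝ)))⁻¹ * Real.exp (-(x ^ 2) / (2 * (v:ℝ)))))
            (volume : Measure ℝ)
          simp only [neg_sq, neg_mul] at hneg
          rw [integral_neg] at hneg
          linarith
        rw [hodd, hzero, integral_const_mul, integral_gaussianPDFReal_eq_one μ hv.ne']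
        ring
    _ = μ := by ring

lemma integral_sq_pdf_Ioi (t : ℝ) :
    ∫ x in Ioi t, (x - t) ^ 2 * gaussianPDFReal μ v x
      = ((μ - t) ^ 2 + (v : ℝ)) * (∫ x in Ioi t, gaussianPDFReal μ v x)
        + (μ - t) * (v : ℝ) * gaussianPDFReal μ v t := by
  have hV : (0 : ℝ) < (v : ℝ) := by exact_mod_cast hv
  set V : ℝ := (v : ℝ) with hVdef
  set C : ℝ := (Real.sqrt (2 * π * v))⁻¹ with hC
  set K : ℝ := (μ - t) ^ 2 + V with hK
  set g : ℝ → ℝ := fun x => -(x + μ - 2 * t) * V * gaussianPDFReal μ v x with hg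
  set g' : ℝ → ℝ := fun x => ((x - t) ^ 2 - K) * gaussianPDFReal μ v x with hg'
  have hb : (0 : ℝ) < (2 * V)⁻¹ := by positivity
  have hderiv : ∀ x : ℝ, HasDerivAt g (g' x) x := by
    intro x
    have h1 : HasDerivAt (fun x : ℝ => (x - μ) ^ 2) (2 * (x - μ)) x := by
      simpa using ((hasDerivAt_id x).sub_const μ).fun_pow 2
    have h2 : HasDerivAt (fun x : ℝ => -(x - μ) ^ 2 / (2 * V))
        (-(2 * (x - μ)) / (2 * V)) x := (h1.neg).div_const (2 * V)
    have h3 : HasDerivAt (fun x : ℝ => Real.exp (-(x - μ) ^ 2 / (2 * V)))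
        (Real.exp (-(x - μ) ^ 2 / (2 * V)) * (-(2 * (x - μ)) / (2 * V))) x := h2.exp
    have h4 : HasDerivAt (fun x : ℝ => gaussianPDFReal μ v x)
        (C * (Real.exp (-(x - μ) ^ 2 / (2 * V)) * (-(2 * (x - μ)) / (2 * V)))) x := by
      have := h3.const_mul C
      refine this.congr_of_eventuallyEq ?_
      filter_upwards with y
      rw [gaussianPDFReal]
    have h5 : HasDerivAt (fun x : ℝ => -(x + μ - 2 * t) * V) (-V) x := by
      have : HasDerivAt (fun x : ℝ => -(x + μ - 2 * t) * V) ((-1) * V) x := by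
        exact (((hasDerivAt_id x).add_const (μ - 2 * t)).neg.mul_const V).congr_of_eventuallyEq
          (by filter_upwards with y; simp only [id_eq, Pi.neg_apply]; ring)
      simpa using this
    have h6 := h5.mul h4
    refine h6.congr_deriv ?_
    have hpdfx : gaussianPDFReal μ v x = C * Real.exp (-(x - μ) ^ 2 / (2 * V)) := by
      rw [gaussianPDFReal]
    simp only [hg', hpdfx, hK]
    have hVne : V ≠ 0 := hV.ne'
    set e := Real.exp (-(x - μ) ^ 2 / (2 * V)) with he
    field_simp
    ring
  have hg'int : IntegrableOn g' (Ioi t) := by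
    have := integrable_poly_mul_pdf hv 1 (-2 * t) (t ^ 2 - K) (μ := μ)
    refine (this.congr (Eventually.of_forall fun x => ?_)).integrableOn
    simp only [hg']
    ring
  have htends : Tendsto g atTop (𝓝 0) := by
    have := (tendsto_linear_mul_gauss (-V) ((2 * t - μ) * V) μ hb).const_mul C
    simp only [mul_zero] at this
    refine this.congr fun x => ?_
    simp only [hg, hC, pdf_eq, ← hVdef]
    ring
  have hftc := integral_Ioi_of_hasDerivAt_of_tendsto' (f := g) (f' := g')
    (fun x _ => hderiv x) hg'int htends
  have hgt : g t = -(μ - t) * V * gaussianPDFReal μ v t := by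
    simp only [hg]; ring
  have hpdfint : IntegrableOn (fun x => gaussianPDFReal μ v x) (Ioi t) :=
    (integrable_gaussianPDFReal μ v).integrableOn
  have hsplit : ∫ x in Ioi t, (x - t) ^ 2 * gaussianPDFReal μ v x
      = (∫ x in Ioi t, g' x) + K * ∫ x in Ioi t, gaussianPDFReal μ v x := by
    rw [← integral_const_mul, ← integral_add hg'int (hpdfint.const_mul K)]
    refine setIntegral_congr_fun measurableSet_Ioi fun x _ => ?_
    simp only [hg']
    ring
  rw [hsplit, hftc, hgt]
  ring

end helpers

open Set Filter Topology ENNReal in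
/-- Expected linear cost plus quadratic penalty above a threshold, for a Gaussian. -/
theorem expected_penalty_cost_gaussian
    {Ω : Type*} [MeasureSpace Ω] (P : Measure Ω) [IsProbabilityMeasure P]
    (Y : Ω → ℝ) (m : ℝ) (q : ℝ≥0) (hq : 0 < q) (xbar a b : ℝ)
    (ha : 0 ≤ a) (hb : 0 ≤ b)
    (hY : P.map Y = gaussianReal m q) :
    (∫ ω, (a * Y ω + b * (max (Y ω - xbar) 0) ^ 2) ∂P) =
      a * m + b * (((m - xbar) ^ 2 + (q : ℝ)) * stdNormalCDF ((m - xbar) / Real.sqrt q)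
        + (m - xbar) * Real.sqrt ((q : ℝ) / (2 * Real.pi)) *
          Real.exp (-((m - xbar) ^ 2) / (2 * (q : ℝ)))) := by
  have hV : (0 : ℝ) < (q : ℝ) := by exact_mod_cast hq
  -- Y is AEMeasurable
  have hYae : AEMeasurable Y P := by
    by_contra h
    rw [Measure.map_of_not_aemeasurable h] at hY
    have := congrArg (fun ν : Measure ℝ => ν Set.univ) hY
    simp [measure_univ] at this
  -- the integrand as a function on ℝ
  set g0 : ℝ → ℝ := fun x => a * x + b * (max (x - xbar) 0) ^ 2 with hg0
  have hg0cont : Continuous g0 := by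
    apply Continuous.add
    · exact continuous_const.mul continuous_id
    · exact continuous_const.mul (((continuous_id.sub continuous_const).max
        continuous_const).pow 2)
  -- move to gaussianReal
  have step1 : (∫ ω, (a * Y ω + b * (max (Y ω - xbar) 0) ^ 2) ∂P)
      = ∫ x, g0 x ∂(gaussianReal m q) := by
    rw [← hY, integral_map hYae hg0cont.aestronglyMeasurable]
  rw [step1]
  -- express via density
  have step2 : ∫ x, g0 x ∂(gaussianReal m q) = ∫ x, gaussianPDFReal m q x * g0 x := by
    rw [gaussianReal_of_var_ne_zero m hq.ne']
    have hpdfco : (gaussianPDF m q) = fun x => ((gaussianPDFReal m q x).toNNReal : ℝ≥0∞) :=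
      rfl
    rw [hpdfco, integral_withDensity_eq_integral_smul
      ((measurable_gaussianPDFReal m q).real_toNNReal) g0]
    congr 1
    ext x
    rw [NNReal.smul_def, Real.coe_toNNReal _ (gaussianPDFReal_nonneg m q x)]
    rfl
  rw [step2]
  -- integrability
  have hint_lin : Integrable (fun x : ℝ => gaussianPDFReal m q x * (a * x)) := by
    have := integrable_poly_mul_pdf hq 0 a 0 (μ := m)
    refine this.congr (Eventually.of_forall fun x => ?_)
    ring
  have hint_quad : Integrable (fun x : ℝ => (x - xbar) ^ 2 * gaussianPDFReal m q x) := by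
    have := integrable_poly_mul_pdf hq 1 (-2 * xbar) (xbar ^ 2) (μ := m)
    refine this.congr (Eventually.of_forall fun x => ?_)
    ring
  have hmax_meas : AEStronglyMeasurable
      (fun x : ℝ => gaussianPDFReal m q x * (b * (max (x - xbar) 0) ^ 2)) volume := by
    refine Continuous.aestronglyMeasurable ?_
    have hpdfc : Continuous (gaussianPDFReal m q) := by
      rw [gaussianPDFReal_def]
      exact continuous_const.mul ((((continuous_id.sub continuous_const).pow 2).neg.div_const
        _).rexp)
    exact hpdfc.mul (continuous_const.mul (((continuous_id.sub continuous_const).max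
      continuous_const).pow 2))
  have hint_max : Integrable (fun x : ℝ => gaussianPDFReal m q x * (b * (max (x - xbar) 0) ^ 2)) := by
    refine Integrable.mono' (hint_quad.const_mul b) hmax_meas
      (Eventually.of_forall fun x => ?_)
    have h1 : (0:ℝ) ≤ gaussianPDFReal m q x := gaussianPDFReal_nonneg m q x
    have h2 : (max (x - xbar) 0) ^ 2 ≤ (x - xbar) ^ 2 := by
      rcases le_total (x - xbar) 0 with h | h
      · rw [max_eq_right h]; simpa using sq_nonneg (x - xbar)
      · rw [max_eq_left h]
    rw [Real.norm_eq_abs, abs_of_nonneg (mul_nonneg h1 (mul_nonneg hb (sq_nonneg _)))]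
    calc gaussianPDFReal m q x * (b * (max (x - xbar) 0) ^ 2)
        ≤ gaussianPDFReal m q x * (b * (x - xbar) ^ 2) := by
          apply mul_le_mul_of_nonneg_left _ h1
          exact mul_le_mul_of_nonneg_left h2 hb
      _ = b * ((x - xbar) ^ 2 * gaussianPDFReal m q x) := by ring
  -- split the integral
  have step3 : ∫ x, gaussianPDFReal m q x * g0 x
      = (∫ x, gaussianPDFReal m q x * (a * x))
        + ∫ x, gaussianPDFReal m q x * (b * (max (x - xbar) 0) ^ 2) := by
    rw [← integral_add hint_lin hint_max]
    congr 1
    ext x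
    rw [hg0]
    ring
  rw [step3]
  -- linear part
  have hlin : ∫ x, gaussianPDFReal m q x * (a * x) = a * m := by
    have : ∀ x : ℝ, gaussianPDFReal m q x * (a * x) = a * (x * gaussianPDFReal m q x) := by
      intro x; ring
    rw [integral_congr_ae (Eventually.of_forall this), integral_const_mul,
      integral_id_pdf hq]
  -- quadratic part: restrict to Ioi xbar
  have hquad : ∫ x, gaussianPDFReal m q x * (b * (max (x - xbar) 0) ^ 2)
      = b * ∫ x in Ioi xbar, (x - xbar) ^ 2 * gaussianPDFReal m q x := by
    rw [← intervalIntegral.integral_Iic_add_Ioi (b := xbar) hint_max.integrableOn hint_max.integrableOn]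
    have hIic : ∫ x in Iic xbar, gaussianPDFReal m q x * (b * (max (x - xbar) 0) ^ 2) = 0 := by
      have hz : ∀ x ∈ Iic xbar, gaussianPDFReal m q x * (b * (max (x - xbar) 0) ^ 2) = 0 := by
        intro x hx
        have hx0 : x - xbar ≤ 0 := by simpa using hx
        rw [max_eq_right hx0]
        ring
      rw [setIntegral_congr_fun measurableSet_Iic hz, integral_zero]
    have hIoi : ∫ x in Ioi xbar, gaussianPDFReal m q x * (b * (max (x - xbar) 0) ^ 2)
        = b * ∫ x in Ioi xbar, (x - xbar) ^ 2 * gaussianPDFReal m q x := by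
      rw [← integral_const_mul]
      refine setIntegral_congr_fun measurableSet_Ioi fun x hx => ?_
      have hx0 : 0 ≤ x - xbar := sub_nonneg.mpr (le_of_lt hx)
      show gaussianPDFReal m q x * (b * (max (x - xbar) 0) ^ 2)
        = b * ((x - xbar) ^ 2 * gaussianPDFReal m q x)
      rw [max_eq_left hx0]
      ring
    rw [hIic, hIoi, zero_add]
  rw [hlin, hquad, integral_sq_pdf_Ioi hq xbar, integral_pdf_Ioi hq xbar]
  -- final algebra: (m - xbar) * q * pdf xbar = (m - xbar) * sqrt (q / (2π)) * exp (...)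
  have hs2pi : Real.sqrt (2 * π) ≠ 0 := by positivity
  have hsq : Real.sqrt (q : ℝ) ≠ 0 := by positivity
  have hpdfxbar : (q : ℝ) * gaussianPDFReal m q xbar
      = Real.sqrt ((q : ℝ) / (2 * π)) * Real.exp (-((m - xbar) ^ 2) / (2 * (q : ℝ))) := by
    rw [gaussianPDFReal]
    have h1 : (xbar - m) ^ 2 = (m - xbar) ^ 2 := by ring
    rw [h1]
    have h2 : Real.sqrt (2 * π * (q : ℝ)) = Real.sqrt (2 * π) * Real.sqrt (q : ℝ) :=
      Real.sqrt_mul (by positivity) _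
    have h3 : Real.sqrt ((q : ℝ) / (2 * π)) = Real.sqrt (q : ℝ) / Real.sqrt (2 * π) :=
      Real.sqrt_div hV.le _
    rw [h2, h3]
    field_simp
    have hss : Real.sqrt (q:ℝ) * Real.sqrt (q:ℝ) = (q:ℝ) := Real.mul_self_sqrt hV.le
    linear_combination (-1 : ℝ) * hss
  linear_combination (b * (m - xbar)) * hpdfxbar
end

section
/- The function g(m) = ((m - x̄)² + q) Φ((m - x̄)/√q) + (m - x̄) √(q/(2π)) exp(-(m - x̄)²/(2q)) is nonnegative, increasing, and convex in m for fixed q > 0 and x̄ ∈ ℝ. -/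
open Real MeasureTheory

open Filter Set Topology

noncomputable def phi (y : ℝ) : ℝ := (Real.sqrt (2 * Real.pi))⁻¹ * Real.exp (-(y ^ 2) / 2)

lemma phi_pos (y : ℝ) : 0 < phi y :=
  mul_pos (inv_pos.2 (Real.sqrt_pos.2 (by positivity))) (Real.exp_pos _)

lemma integrable_pow_phi (n : ℕ) : Integrable (fun y : ℝ => y ^ n * phi y) := by
  have h := (integrable_rpow_mul_exp_neg_mul_sq (b := 1/2) (by norm_num) (s := n)
    ((by norm_num : (-1:ℝ) < 0).trans_le n.cast_nonneg)).const_mul (Real.sqrt (2 * Real.pi))⁻¹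
  refine h.congr (Eventually.of_forall fun y => ?_)
  show (Real.sqrt (2 * Real.pi))⁻¹ * (y ^ (n:ℝ) * Real.exp (-(1/2) * y ^ 2)) = _
  rw [Real.rpow_natCast]
  unfold phi
  ring_nf

lemma tendsto_pow_phi_atBot (n : ℕ) :
    Tendsto (fun y : ℝ => y ^ n * phi y) atBot (𝓝 0) := by
  have h1 : Tendsto (fun x : ℝ => x ^ (n:ℝ) * Real.exp (-(1/2) * x ^ 2)) atTop (𝓝 0) := by
    refine (rpow_mul_exp_neg_mul_sq_isLittleO_exp_neg (by norm_num) _).trans_tendsto ?_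
    exact Real.tendsto_exp_atBot.comp
      (tendsto_id.const_mul_atTop_of_neg (by norm_num : (-((1:ℝ)/2)) < 0))
  have h2 : Tendsto (fun y : ℝ => (-y) ^ n * phi (-y)) atTop (𝓝 0) := by
    have := h1.const_mul ((-1 : ℝ) ^ n * (Real.sqrt (2 * Real.pi))⁻¹)
    rw [mul_zero] at this
    refine this.congr fun y => ?_
    show (-1 : ℝ) ^ n * (Real.sqrt (2 * Real.pi))⁻¹ * (y ^ (n:ℝ) * Real.exp (-(1/2) * y ^ 2)) = _
    rw [Real.rpow_natCast]
    unfold phi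
    rw [neg_pow, neg_sq]
    ring_nf
  have := h2.comp tendsto_neg_atBot_atTop
  refine this.congr fun y => ?_
  simp [Function.comp]

lemma hasDerivAt_phi (y : ℝ) : HasDerivAt phi (-y * phi y) y := by
  have h : HasDerivAt (fun y : ℝ => -(y ^ 2) / 2) (-y) y := by
    have := ((hasDerivAt_pow 2 y).neg.div_const 2)
    exact this.congr_deriv (by norm_num; ring)
  have := (h.exp.const_mul (Real.sqrt (2 * Real.pi))⁻¹)
  exact this.congr_deriv (by unfold phi; ring)

lemma integrable_phi : Integrable phi := by
  simpa using integrable_pow_phi 0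

lemma integral_phi_Iic (t : ℝ) : ∫ y in Iic t, phi y = stdNormalCDF t := rfl

lemma integral_id_phi_Iic (t : ℝ) : ∫ y in Iic t, y * phi y = -phi t := by
  have h := integral_Iic_of_hasDerivAt_of_tendsto' (f := fun y => -phi y)
    (f' := fun y => y * phi y) (a := t) (m := 0)
    (fun x _ => (hasDerivAt_phi x).neg.congr_deriv (by ring))
    (by simpa using (integrable_pow_phi 1).integrableOn)
    (by
      have := (tendsto_pow_phi_atBot 0).neg
      simp only [pow_zero, one_mul, neg_zero] at this
      simpa using this)
  rw [sub_zero] at h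
  exact h

example (t : ℝ) : True := by
  have hint : IntegrableOn (fun y : ℝ => y ^ 2 * phi y - phi y) (Iic t) :=
    ((integrable_pow_phi 2).sub integrable_phi).integrableOn
  trivial

set_option maxHeartbeats 1000000 in
lemma integral_sq_phi_Iic (t : ℝ) :
    ∫ y in Iic t, y ^ 2 * phi y = stdNormalCDF t - t * phi t := by
  have hd : ∀ x ∈ Iic t, HasDerivAt (fun y => -(y * phi y)) (x ^ 2 * phi x - phi x) x := by
    intro x _
    have h0 := ((hasDerivAt_id x).mul (hasDerivAt_phi x)).neg
    simp only [id_eq, one_mul] at h0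
    have he : x ^ 2 * phi x - phi x = -(phi x + x * (-x * phi x)) := by ring
    rw [he]
    exact h0
  have hint : IntegrableOn (fun y : ℝ => y ^ 2 * phi y - phi y) (Iic t) :=
    ((integrable_pow_phi 2).sub integrable_phi).integrableOn
  have htd : Tendsto (fun y => -(y * phi y)) atBot (𝓝 (0:ℝ)) := by
    have h1 := (tendsto_pow_phi_atBot 1).neg
    simp only [pow_one, neg_zero] at h1
    exact h1
  have h := integral_Iic_of_hasDerivAt_of_tendsto' hd hint htd
  rw [sub_zero] at h
  have h2 : ∫ y in Iic t, (y ^ 2 * phi y - phi y)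
      = (∫ y in Iic t, y ^ 2 * phi y) - ∫ y in Iic t, phi y :=
    integral_sub ((integrable_pow_phi 2).integrableOn) (integrable_phi.integrableOn)
  rw [h2] at h
  rw [integral_phi_Iic] at h
  linarith

lemma integrable_id_phi : Integrable (fun y : ℝ => y * phi y) := by
  have := integrable_pow_phi 1
  simpa using this

lemma integrable_comb_phi (t : ℝ) :
    Integrable (fun y : ℝ => t ^ 2 * phi y - 2 * t * (y * phi y) + y ^ 2 * phi y) := by
  have h := ((integrable_phi.const_mul (t ^ 2)).sub
    (integrable_id_phi.const_mul (2 * t))).add (integrable_pow_phi 2)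
  refine h.congr (Eventually.of_forall fun y => ?_)
  simp [Pi.sub_apply, Pi.add_apply]

lemma integrable_sq_sub_phi (t : ℝ) : Integrable (fun y : ℝ => (t - y) ^ 2 * phi y) := by
  refine (integrable_comb_phi t).congr (Eventually.of_forall fun y => ?_)
  ring

lemma repr_eq (t : ℝ) :
    ∫ y in Iic t, (t - y) ^ 2 * phi y
      = (t ^ 2 + 1) * stdNormalCDF t + t * phi t := by
  have h1 : ∫ y in Iic t, (t - y) ^ 2 * phi y
      = ∫ y in Iic t, (t ^ 2 * phi y - 2 * t * (y * phi y) + y ^ 2 * phi y) := by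
    refine setIntegral_congr_fun measurableSet_Iic fun y _ => ?_
    ring
  rw [h1]
  have hsub : IntegrableOn (fun y : ℝ => t ^ 2 * phi y - 2 * t * (y * phi y)) (Iic t) :=
    (((integrable_phi.const_mul (t ^ 2)).sub
      (integrable_id_phi.const_mul (2 * t))).congr
        (Eventually.of_forall fun y => by simp [Pi.sub_apply])).integrableOn
  rw [integral_add hsub ((integrable_pow_phi 2).integrableOn)]
  rw [integral_sub ((integrable_phi.const_mul (t ^ 2)).integrableOn)
    ((integrable_id_phi.const_mul (2 * t)).integrableOn)]
  rw [integral_const_mul, integral_const_mul, integral_phi_Iic, integral_id_phi_Iic,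
    integral_sq_phi_Iic]
  ring

noncomputable def Gfun (t : ℝ) : ℝ := ∫ y, max (t - y) 0 ^ 2 * phi y

lemma maxsq_eq_indicator (t : ℝ) :
    (fun y => max (t - y) 0 ^ 2 * phi y) = (Iic t).indicator (fun y => (t - y) ^ 2 * phi y) := by
  funext y
  by_cases h : y ≤ t
  · rw [Set.indicator_of_mem (show y ∈ Iic t from h)]
    rw [max_eq_left (by linarith)]
  · rw [Set.indicator_of_notMem (show y ∉ Iic t from h)]
    rw [max_eq_right (by linarith), zero_pow two_ne_zero, zero_mul]

lemma integrable_maxsq (t : ℝ) : Integrable (fun y => max (t - y) 0 ^ 2 * phi y) := by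
  rw [maxsq_eq_indicator]
  exact (integrable_indicator_iff measurableSet_Iic).2 ((integrable_sq_sub_phi t).integrableOn)

lemma Gfun_eq (t : ℝ) : Gfun t = ∫ y in Iic t, (t - y) ^ 2 * phi y := by
  unfold Gfun
  rw [maxsq_eq_indicator, integral_indicator measurableSet_Iic]

lemma Gfun_nonneg (t : ℝ) : 0 ≤ Gfun t := by
  rw [Gfun_eq]
  exact setIntegral_nonneg measurableSet_Iic fun y _ =>
    mul_nonneg (sq_nonneg _) (phi_pos y).le

lemma Gfun_mono : Monotone Gfun := by
  intro t1 t2 h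
  refine integral_mono (integrable_maxsq t1) (integrable_maxsq t2) fun y => ?_
  exact mul_le_mul_of_nonneg_right
    (pow_le_pow_left₀ (le_max_right _ _) (max_le_max (by linarith) le_rfl) 2)
    (phi_pos y).le

lemma maxsq_convex (z : ℝ) : ConvexOn ℝ univ (fun t : ℝ => max (t - z) 0 ^ 2) := by
  refine ⟨convex_univ, fun x _ y _ a b ha hb hab => ?_⟩
  simp only [smul_eq_mul]
  set p := max (x - z) 0 with hp
  set r := max (y - z) 0 with hr
  have hp0 : 0 ≤ p := le_max_right _ _
  have hr0 : 0 ≤ r := le_max_right _ _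
  have hpx : x - z ≤ p := le_max_left _ _
  have hry : y - z ≤ r := le_max_left _ _
  have h1 : max (a * x + b * y - z) 0 ≤ a * p + b * r := by
    apply max_le
    · have hz : a * z + b * z = z := by rw [← add_mul, hab, one_mul]
      have e1 := mul_le_mul_of_nonneg_left hpx ha
      have e2 := mul_le_mul_of_nonneg_left hry hb
      rw [mul_sub] at e1 e2
      linarith
    · positivity
  have h2 : max (a * x + b * y - z) 0 ^ 2 ≤ (a * p + b * r) ^ 2 :=
    pow_le_pow_left₀ (le_max_right _ _) h1 2
  have h3 : (a * p + b * r) ^ 2 ≤ a * p ^ 2 + b * r ^ 2 := by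
    nlinarith [sq_nonneg (p - r), mul_nonneg ha hb]
  linarith

lemma Gfun_convex : ConvexOn ℝ univ Gfun := by
  refine ⟨convex_univ, fun x _ y _ a b ha hb hab => ?_⟩
  simp only [smul_eq_mul]
  have key : ∀ z : ℝ, max (a * x + b * y - z) 0 ^ 2 * phi z
      ≤ a * (max (x - z) 0 ^ 2 * phi z) + b * (max (y - z) 0 ^ 2 * phi z) := by
    intro z
    have h := (maxsq_convex z).2 (mem_univ x) (mem_univ y) ha hb hab
    simp only [smul_eq_mul] at h
    have := mul_le_mul_of_nonneg_right h (phi_pos z).le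
    calc max (a * x + b * y - z) 0 ^ 2 * phi z
        ≤ (a * max (x - z) 0 ^ 2 + b * max (y - z) 0 ^ 2) * phi z := this
      _ = a * (max (x - z) 0 ^ 2 * phi z) + b * (max (y - z) 0 ^ 2 * phi z) := by ring
  have h1 : Gfun (a * x + b * y)
      ≤ ∫ z, (a * (max (x - z) 0 ^ 2 * phi z) + b * (max (y - z) 0 ^ 2 * phi z)) :=
    integral_mono (integrable_maxsq _)
      (((integrable_maxsq x).const_mul a).add ((integrable_maxsq y).const_mul b)) key
  rw [integral_add ((integrable_maxsq x).const_mul a) ((integrable_maxsq y).const_mul b),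
    integral_const_mul, integral_const_mul] at h1
  exact h1

lemma g_eq (q xbar : ℝ) (hq : 0 < q) (m : ℝ) :
    ((m - xbar) ^ 2 + q) * stdNormalCDF ((m - xbar) / Real.sqrt q)
        + (m - xbar) * Real.sqrt (q / (2 * Real.pi)) *
          Real.exp (-((m - xbar) ^ 2) / (2 * q))
      = q * Gfun ((m - xbar) / Real.sqrt q) := by
  have hsq : Real.sqrt q ^ 2 = q := Real.sq_sqrt hq.le
  have hs : 0 < Real.sqrt q := Real.sqrt_pos.2 hq
  have h2π : 0 < Real.sqrt (2 * Real.pi) := Real.sqrt_pos.2 (by positivity)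
  set u := m - xbar with hu
  set t := u / Real.sqrt q with ht
  rw [Gfun_eq, repr_eq]
  have ht2 : t ^ 2 = u ^ 2 / q := by
    rw [ht, div_pow, hsq]
  have hexp : -(t ^ 2) / 2 = -(u ^ 2) / (2 * q) := by
    rw [ht2, neg_div, div_div, neg_div, mul_comm q 2]
  have hsqrtdiv : Real.sqrt (q / (2 * Real.pi)) = Real.sqrt q / Real.sqrt (2 * Real.pi) :=
    Real.sqrt_div hq.le _
  unfold phi
  rw [hexp, hsqrtdiv]
  have h1 : q * (t ^ 2 + 1) = u ^ 2 + q := by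
    rw [ht2]; field_simp
  have h2 : q * (t * ((Real.sqrt (2 * Real.pi))⁻¹ * Real.exp (-(u ^ 2) / (2 * q))))
      = u * (Real.sqrt q / Real.sqrt (2 * Real.pi)) * Real.exp (-(u ^ 2) / (2 * q)) := by
    rw [ht]
    field_simp
    linear_combination (-u) * hsq
  linear_combination (-(stdNormalCDF t)) * h1 - h2

/-- The expected quadratic penalty, as a function of the conditional mean `m`,
is nonnegative, increasing and convex. -/
theorem penalty_nonneg_monotone_convex (q xbar : ℝ) (hq : 0 < q) :
    let g : ℝ → ℝ := fun m =>
      ((m - xbar) ^ 2 + q) * stdNormalCDF ((m - xbar) / Real.sqrt q)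
        + (m - xbar) * Real.sqrt (q / (2 * Real.pi)) *
          Real.exp (-((m - xbar) ^ 2) / (2 * q))
    (∀ m, 0 ≤ g m) ∧ Monotone g ∧ ConvexOn ℝ Set.univ g := by
  intro g
  have hg : ∀ m, g m = q * Gfun ((m - xbar) / Real.sqrt q) := fun m => g_eq q xbar hq m
  have hs : 0 < Real.sqrt q := Real.sqrt_pos.2 hq
  refine ⟨fun m => ?_, fun m1 m2 h => ?_, ⟨convex_univ, fun x _ y _ a b ha hb hab => ?_⟩⟩
  · rw [hg]
    exact mul_nonneg hq.le (Gfun_nonneg _)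
  · rw [hg, hg]
    refine mul_le_mul_of_nonneg_left (Gfun_mono ?_) hq.le
    exact div_le_div_of_nonneg_right (by linarith) hs.le
  · simp only [smul_eq_mul]
    rw [hg, hg, hg]
    have haff : (a * x + b * y - xbar) / Real.sqrt q
        = a * ((x - xbar) / Real.sqrt q) + b * ((y - xbar) / Real.sqrt q) := by
      have h0 : a * x + b * y - xbar = a * (x - xbar) + b * (y - xbar) := by
        linear_combination xbar * hab
      rw [h0, add_div, mul_div_assoc, mul_div_assoc]
    rw [haff]
    have hc := Gfun_convex.2 (mem_univ ((x - xbar) / Real.sqrt q))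
      (mem_univ ((y - xbar) / Real.sqrt q)) ha hb hab
    simp only [smul_eq_mul] at hc
    nlinarith [mul_le_mul_of_nonneg_left hc hq.le]
end

section
/- For fixed m and x̄, the function q ↦ ((m - x̄)² + q) Φ((m - x̄)/√q) + (m - x̄) √(q/(2π)) exp(-(m - x̄)²/(2q)) is monotone increasing on (0, ∞). -/
open Real MeasureTheory

lemma phi_integrable :
    MeasureTheory.Integrable (fun y : ℝ => (Real.sqrt (2 * Real.pi))⁻¹ * Real.exp (-(y ^ 2) / 2)) := by
  have h : MeasureTheory.Integrable (fun y : ℝ => Real.exp (-(1/2 : ℝ) * y ^ 2)) :=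
    integrable_exp_neg_mul_sq (by norm_num)
  have heq : (fun y : ℝ => (Real.sqrt (2 * Real.pi))⁻¹ * Real.exp (-(y ^ 2) / 2))
      = fun y : ℝ => (Real.sqrt (2 * Real.pi))⁻¹ * Real.exp (-(1/2 : ℝ) * y ^ 2) := by
    funext y; ring_nf
  rw [heq]
  exact h.const_mul _

lemma phi_continuous :
    Continuous (fun y : ℝ => (Real.sqrt (2 * Real.pi))⁻¹ * Real.exp (-(y ^ 2) / 2)) := by
  continuity

lemma stdNormalCDF_eq (t : ℝ) :
    stdNormalCDF t = stdNormalCDF 0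
      + ∫ y in (0:ℝ)..t, (Real.sqrt (2 * Real.pi))⁻¹ * Real.exp (-(y ^ 2) / 2) := by
  rw [← intervalIntegral.integral_Iic_sub_Iic phi_integrable.integrableOn
    phi_integrable.integrableOn]
  simp [stdNormalCDF]

lemma hasDerivAt_stdNormalCDF (t : ℝ) :
    HasDerivAt stdNormalCDF ((Real.sqrt (2 * Real.pi))⁻¹ * Real.exp (-(t ^ 2) / 2)) t := by
  have h : HasDerivAt (fun u => stdNormalCDF 0
      + ∫ y in (0:ℝ)..u, (Real.sqrt (2 * Real.pi))⁻¹ * Real.exp (-(y ^ 2) / 2))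
      ((Real.sqrt (2 * Real.pi))⁻¹ * Real.exp (-(t ^ 2) / 2)) t := by
    refine HasDerivAt.const_add _ ?_
    exact intervalIntegral.integral_hasDerivAt_right
      phi_integrable.intervalIntegrable
      phi_continuous.aestronglyMeasurable.stronglyMeasurableAtFilter
      phi_continuous.continuousAt
  have hfun : stdNormalCDF = fun u => stdNormalCDF 0
      + ∫ y in (0:ℝ)..u, (Real.sqrt (2 * Real.pi))⁻¹ * Real.exp (-(y ^ 2) / 2) := by
    funext u; exact stdNormalCDF_eq u
  rw [hfun]; exact h

lemma stdNormalCDF_nonneg (t : ℝ) : 0 ≤ stdNormalCDF t := by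
  apply MeasureTheory.setIntegral_nonneg measurableSet_Iic
  intro y _; positivity

lemma penalty_hasDerivAt (a q : ℝ) (hq0 : 0 < q) :
    HasDerivAt (fun q : ℝ =>
      (a ^ 2 + q) * stdNormalCDF (a / Real.sqrt q)
        + a * Real.sqrt (q / (2 * Real.pi)) * Real.exp (-(a ^ 2) / (2 * q)))
      (stdNormalCDF (a / Real.sqrt q)) q := by
  have hsq : (0:ℝ) < Real.sqrt q := Real.sqrt_pos.mpr hq0
  have hsq2 : Real.sqrt q ^ 2 = q := Real.sq_sqrt hq0.le
  have h2pi : (0:ℝ) < 2 * Real.pi := by positivity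
  have hs2pi : (0:ℝ) < Real.sqrt (2 * Real.pi) := Real.sqrt_pos.mpr h2pi
  have hsqrt : HasDerivAt Real.sqrt (1 / (2 * Real.sqrt q)) q :=
    Real.hasDerivAt_sqrt hq0.ne'
  have hg : HasDerivAt (fun q : ℝ => a / Real.sqrt q)
      ((0 * Real.sqrt q - a * (1 / (2 * Real.sqrt q))) / (Real.sqrt q) ^ 2) q :=
    (hasDerivAt_const q a).div hsqrt hsq.ne'
  have hC : HasDerivAt (fun q : ℝ => stdNormalCDF (a / Real.sqrt q))
      (((Real.sqrt (2 * Real.pi))⁻¹ * Real.exp (-((a / Real.sqrt q) ^ 2) / 2)) *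
        ((0 * Real.sqrt q - a * (1 / (2 * Real.sqrt q))) / (Real.sqrt q) ^ 2)) q :=
    by have := (hasDerivAt_stdNormalCDF (a / Real.sqrt q)).comp q hg; exact this
  have hden : HasDerivAt (fun x : ℝ => 2 * x) 2 q := by
    simpa using (hasDerivAt_id q).const_mul (2:ℝ)
  have hu : HasDerivAt (fun q : ℝ => -(a ^ 2) / (2 * q))
      ((0 * (2 * q) - (-(a ^ 2)) * 2) / (2 * q) ^ 2) q :=
    (hasDerivAt_const q (-(a ^ 2))).div hden (by positivity)
  have hE : HasDerivAt (fun q : ℝ => Real.exp (-(a ^ 2) / (2 * q)))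
      (Real.exp (-(a ^ 2) / (2 * q)) *
        ((0 * (2 * q) - (-(a ^ 2)) * 2) / (2 * q) ^ 2)) q := hu.exp
  have hSfun : (fun q : ℝ => Real.sqrt (q / (2 * Real.pi)))
      = fun q : ℝ => Real.sqrt q / Real.sqrt (2 * Real.pi) := by
    funext x
    rcases le_or_gt 0 x with h | h
    · rw [Real.sqrt_div h]
    · rw [Real.sqrt_eq_zero_of_nonpos h.le,
        Real.sqrt_eq_zero_of_nonpos (div_nonpos_of_nonpos_of_nonneg h.le h2pi.le), zero_div]
  have hS : HasDerivAt (fun q : ℝ => Real.sqrt (q / (2 * Real.pi)))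
      (1 / (2 * Real.sqrt q) / Real.sqrt (2 * Real.pi)) q := by
    rw [hSfun]; exact hsqrt.div_const _
  have h1 : HasDerivAt (fun q : ℝ => a ^ 2 + q) 1 q := by
    simpa using (hasDerivAt_id q).const_add (a ^ 2)
  have htot := (h1.mul hC).add ((hS.const_mul a).mul hE)
  have hexp : Real.exp (-((a / Real.sqrt q) ^ 2) / 2)
      = Real.exp (-(a ^ 2) / (2 * q)) := by
    congr 1
    rw [div_pow, hsq2]; ring
  have hSS : Real.sqrt (q / (2 * Real.pi)) = Real.sqrt q / Real.sqrt (2 * Real.pi) :=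
    congrFun hSfun q
  refine htot.congr_deriv ?_; symm
  rw [hexp, hSS]
  set C := stdNormalCDF (a / Real.sqrt q) with hCdef
  set Ex := Real.exp (-(a ^ 2) / (2 * q)) with hEdef
  set s := Real.sqrt q with hsdef
  set w := Real.sqrt (2 * Real.pi) with hwdef
  rw [← hsq2]
  field_simp
  ring

/-- The expected quadratic penalty is monotone increasing in the variance `q` on `(0, ∞)`. -/
theorem penalty_monotone_in_variance (m xbar : ℝ) :
    MonotoneOn (fun q : ℝ =>
      ((m - xbar) ^ 2 + q) * stdNormalCDF ((m - xbar) / Real.sqrt q)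
        + (m - xbar) * Real.sqrt (q / (2 * Real.pi)) *
          Real.exp (-((m - xbar) ^ 2) / (2 * q)))
      (Set.Ioi (0 : ℝ)) := by
  have key : ∀ q ∈ Set.Ioi (0:ℝ), HasDerivAt (fun q : ℝ =>
      ((m - xbar) ^ 2 + q) * stdNormalCDF ((m - xbar) / Real.sqrt q)
        + (m - xbar) * Real.sqrt (q / (2 * Real.pi)) *
          Real.exp (-((m - xbar) ^ 2) / (2 * q)))
      (stdNormalCDF ((m - xbar) / Real.sqrt q)) q :=
    fun q hq => penalty_hasDerivAt (m - xbar) q hq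
  exact monotoneOn_of_deriv_nonneg (convex_Ioi (0:ℝ))
    (fun q hq => ((key q hq).continuousAt.continuousWithinAt))
    (fun q hq => by
      rw [interior_Ioi] at hq
      exact (key q hq).differentiableAt.differentiableWithinAt)
    (fun q hq => by
      rw [interior_Ioi] at hq
      rw [(key q hq).deriv]
      exact stdNormalCDF_nonneg _)
end

section
/- Let E be a random vector in ℝ^d with law μ whose support contains at least N points (N ≥ 2), and with finite p-th moment. Then the L^p optimal quantization error at level N is strictly smaller than at level N-1: D_{N,p}(E) < D_{N-1,p}(E). -/
open MeasureTheory Metric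

lemma quant_integrable {d : ℕ} (μ : Measure (EuclideanSpace ℝ (Fin d)))
    [IsProbabilityMeasure μ] {p : ℝ} (hp : 1 ≤ p)
    (hmom : Integrable (fun y => ‖y‖ ^ p) μ)
    (Γ : Finset (EuclideanSpace ℝ (Fin d))) (hΓ : Γ.Nonempty) :
    Integrable (fun y => infDist y (Γ : Set (EuclideanSpace ℝ (Fin d))) ^ p) μ := by
  obtain ⟨a₀, ha₀⟩ := hΓ
  have hp0 : (0:ℝ) < p := by linarith
  have hbound : ∀ y, infDist y (Γ : Set (EuclideanSpace ℝ (Fin d))) ^ p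
      ≤ 2 ^ p * ‖y‖ ^ p + 2 ^ p * ‖a₀‖ ^ p := by
    intro y
    have h1 : infDist y (Γ : Set (EuclideanSpace ℝ (Fin d))) ≤ ‖y‖ + ‖a₀‖ := by
      refine (infDist_le_dist_of_mem (Finset.mem_coe.mpr ha₀)).trans ?_
      rw [dist_eq_norm]; exact norm_sub_le _ _
    have h2 : infDist y (Γ : Set (EuclideanSpace ℝ (Fin d))) ^ p ≤ (‖y‖ + ‖a₀‖) ^ p :=
      Real.rpow_le_rpow infDist_nonneg h1 hp0.le
    refine h2.trans ?_
    have h3 : ‖y‖ + ‖a₀‖ ≤ 2 * max ‖y‖ ‖a₀‖ := by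
      rcases le_total ‖y‖ ‖a₀‖ with h | h
      · rw [max_eq_right h]; linarith
      · rw [max_eq_left h]; linarith
    calc (‖y‖ + ‖a₀‖) ^ p ≤ (2 * max ‖y‖ ‖a₀‖) ^ p :=
          Real.rpow_le_rpow (by positivity) h3 hp0.le
      _ = 2 ^ p * (max ‖y‖ ‖a₀‖) ^ p :=
          Real.mul_rpow (by norm_num) (le_max_iff.mpr (Or.inl (norm_nonneg _)))
      _ ≤ 2 ^ p * (‖y‖ ^ p + ‖a₀‖ ^ p) := by
          refine mul_le_mul_of_nonneg_left ?_ (Real.rpow_nonneg (by norm_num) p)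
          rcases max_choice ‖y‖ ‖a₀‖ with h | h <;> rw [h]
          · linarith [Real.rpow_nonneg (norm_nonneg a₀) p]
          · linarith [Real.rpow_nonneg (norm_nonneg y) p]
      _ = 2 ^ p * ‖y‖ ^ p + 2 ^ p * ‖a₀‖ ^ p := by ring
  refine Integrable.mono' ((hmom.const_mul (2 ^ p)).add (integrable_const (2 ^ p * ‖a₀‖ ^ p)))
    ?_ (Filter.Eventually.of_forall fun y => ?_)
  · exact ((continuous_infDist_pt (Γ : Set (EuclideanSpace ℝ (Fin d)))).rpow_const
      (fun y => Or.inr hp0.le)).aestronglyMeasurable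
  · rw [Real.norm_eq_abs, abs_of_nonneg (Real.rpow_nonneg infDist_nonneg p)]
    exact hbound y

/-- The `L^p` optimal quantization error at level `N` of a law `μ` on `ℝ^d`. -/
noncomputable def quantError {d : ℕ} (μ : Measure (EuclideanSpace ℝ (Fin d)))
    (p : ℝ) (N : ℕ) : ℝ :=
  sInf { e : ℝ | ∃ Γ : Finset (EuclideanSpace ℝ (Fin d)), Γ.Nonempty ∧ Γ.card ≤ N ∧
    e = (∫ y, Metric.infDist y (Γ : Set (EuclideanSpace ℝ (Fin d))) ^ p ∂μ) ^ (1 / p) }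

set_option maxHeartbeats 1000000 in
/-- Strict decrease of the optimal quantization error: if the support of `μ` contains
at least `N ≥ 2` points and `μ` has finite `p`-th moment, then `D_{N,p} < D_{N-1,p}`. -/
theorem quantError_strict_decreasing {d : ℕ}
    (μ : Measure (EuclideanSpace ℝ (Fin d))) [IsProbabilityMeasure μ]
    (p : ℝ) (hp : 1 ≤ p)
    (hmom : Integrable (fun y => ‖y‖ ^ p) μ)
    (N : ℕ) (hN : 2 ≤ N)
    (hsupp : ∃ S : Finset (EuclideanSpace ℝ (Fin d)), S.card = N ∧
      ∀ x ∈ S, ∀ ε > 0, μ (Metric.ball x ε) ≠ 0) :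
    quantError μ p N < quantError μ p (N - 1) := by
  classical
  obtain ⟨S, hScard, hSsupp⟩ := hsupp
  have hp0 : (0:ℝ) < p := by linarith
  have hSne : S.Nonempty := Finset.card_pos.mp (by omega)
  -- minimal separation r of S
  have hrex : ∃ r : ℝ, 0 < r ∧ ∀ x ∈ S, ∀ y ∈ S, x ≠ y → r ≤ dist x y := by
    obtain ⟨a, haS, b, hbS, hab⟩ := Finset.one_lt_card.mp (by omega : 1 < S.card)
    set DS : Finset ℝ := ((S ×ˢ S).image (fun q => dist q.1 q.2)).filter (fun t => 0 < t)
      with hDS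
    have hmem : dist a b ∈ DS := by
      rw [hDS, Finset.mem_filter]
      exact ⟨Finset.mem_image.mpr ⟨(a, b), Finset.mem_product.mpr ⟨haS, hbS⟩, rfl⟩,
        dist_pos.mpr hab⟩
    refine ⟨DS.min' ⟨_, hmem⟩, ?_, ?_⟩
    · exact (Finset.mem_filter.mp (DS.min'_mem ⟨_, hmem⟩)).2
    · intro x hx y hy hxy
      apply Finset.min'_le
      rw [hDS, Finset.mem_filter]
      exact ⟨Finset.mem_image.mpr ⟨(x, y), Finset.mem_product.mpr ⟨hx, hy⟩, rfl⟩,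
        dist_pos.mpr hxy⟩
  obtain ⟨r, hr0, hrS⟩ := hrex
  -- uniform gain constant
  set c : ℝ := (2 * r / 9) ^ p - (r / 9) ^ p with hcdef
  have hc0 : 0 < c := by
    have := Real.rpow_lt_rpow (by positivity : (0:ℝ) ≤ r / 9)
      (by linarith : r / 9 < 2 * r / 9) hp0
    simpa [hcdef, sub_pos] using this
  set δ : ℝ := S.inf' hSne (fun x => c * (μ (ball x (r / 9))).toReal) with hδdef
  have hδ0 : 0 < δ := by
    rw [hδdef, Finset.lt_inf'_iff]
    intro x hx
    have hpos : 0 < (μ (ball x (r / 9))).toReal :=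
      ENNReal.toReal_pos (hSsupp x hx (r / 9) (by positivity)) (measure_ne_top μ _)
    positivity
  -- key uniform improvement step
  have key : ∀ Γ : Finset (EuclideanSpace ℝ (Fin d)), Γ.Nonempty → Γ.card ≤ N - 1 →
      ∃ Γ' : Finset (EuclideanSpace ℝ (Fin d)), Γ'.Nonempty ∧ Γ'.card ≤ N ∧
        (∫ y, infDist y (Γ' : Set (EuclideanSpace ℝ (Fin d))) ^ p ∂μ)
          ≤ (∫ y, infDist y (Γ : Set (EuclideanSpace ℝ (Fin d))) ^ p ∂μ) - δ := by
    intro Γ hΓ hcard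
    have hΓcoe : (Γ : Set (EuclideanSpace ℝ (Fin d))).Nonempty := Finset.coe_nonempty.mpr hΓ
    -- find x ∈ S far from Γ by pigeonhole
    have hx : ∃ x ∈ S, ∀ a ∈ Γ, r / 3 ≤ dist x a := by
      by_contra hcon
      push_neg at hcon
      choose! f hfΓ hfd using hcon
      obtain ⟨x, hxS, y, hyS, hxy, hfe⟩ :=
        Finset.exists_ne_map_eq_of_card_lt_of_maps_to (by omega : Γ.card < S.card) hfΓ
      have h1 : dist x y ≤ dist x (f x) + dist y (f y) := by
        calc dist x y ≤ dist x (f x) + dist (f x) y := dist_triangle _ _ _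
          _ = dist x (f x) + dist y (f y) := by rw [hfe, dist_comm y (f y)]
      have := hrS x hxS y hyS hxy
      have hdx := hfd x hxS
      have hdy := hfd y hyS
      linarith
    obtain ⟨x, hxS, hxfar⟩ := hx
    refine ⟨insert x Γ, ⟨x, Finset.mem_insert_self x Γ⟩, ?_, ?_⟩
    · calc (insert x Γ).card ≤ Γ.card + 1 := Finset.card_insert_le _ _
        _ ≤ N := by omega
    · set f : EuclideanSpace ℝ (Fin d) → ℝ :=
        fun y => infDist y (Γ : Set (EuclideanSpace ℝ (Fin d))) ^ p with hfdef
      set g : EuclideanSpace ℝ (Fin d) → ℝ :=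
        fun y => infDist y ((insert x Γ : Finset _) : Set (EuclideanSpace ℝ (Fin d))) ^ p
        with hgdef
      have hfint : Integrable f μ := quant_integrable μ hp hmom Γ hΓ
      have hgint : Integrable g μ :=
        quant_integrable μ hp hmom (insert x Γ) ⟨x, Finset.mem_insert_self x Γ⟩
      have hle : ∀ y, g y ≤ f y := by
        intro y
        refine Real.rpow_le_rpow infDist_nonneg ?_ hp0.le
        exact infDist_le_infDist_of_subset
          (Finset.coe_subset.mpr (Finset.subset_insert x Γ)) hΓcoe
      have hball : ∀ y ∈ ball x (r / 9), c ≤ f y - g y := by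
        intro y hy
        have hyx : dist y x < r / 9 := mem_ball.mp hy
        have h1 : g y ≤ (r / 9) ^ p := by
          refine Real.rpow_le_rpow infDist_nonneg ?_ hp0.le
          exact le_trans (infDist_le_dist_of_mem (Finset.mem_coe.mpr (Finset.mem_insert_self x Γ))) hyx.le
        have h2 : (2 * r / 9) ^ p ≤ f y := by
          refine Real.rpow_le_rpow (by positivity) ?_ hp0.le
          by_contra hlt
          push_neg at hlt
          obtain ⟨a, haΓ, hda⟩ := (infDist_lt_iff hΓcoe).mp hlt
          have haΓ' : a ∈ Γ := by exact_mod_cast haΓ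
          have := hxfar a haΓ'
          have : dist x a ≤ dist x y + dist y a := dist_triangle _ _ _
          rw [dist_comm x y] at this
          linarith [hxfar a haΓ']
        rw [hcdef]; linarith
      have hsub : Integrable (fun y => f y - g y) μ := hfint.sub hgint
      have h4 : c * (μ (ball x (r / 9))).toReal ≤ ∫ y in ball x (r / 9), (f y - g y) ∂μ :=
        setIntegral_ge_of_const_le_real measurableSet_ball (measure_ne_top μ _) hball
          hsub.integrableOn
      have h5 : (∫ y in ball x (r / 9), (f y - g y) ∂μ) ≤ ∫ y, (f y - g y) ∂μ :=
        setIntegral_le_integral hsub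
          (Filter.Eventually.of_forall fun y => sub_nonneg.mpr (hle y))
      have h6 : δ ≤ c * (μ (ball x (r / 9))).toReal := Finset.inf'_le _ hxS
      have h7 : (∫ y, (f y - g y) ∂μ) = (∫ y, f y ∂μ) - ∫ y, g y ∂μ :=
        integral_sub hfint hgint
      rw [h7] at h5
      linarith
  -- sInf bookkeeping
  set A : ℕ → Set ℝ := fun n =>
    { e : ℝ | ∃ Γ : Finset (EuclideanSpace ℝ (Fin d)), Γ.Nonempty ∧ Γ.card ≤ n ∧
      e = (∫ y, Metric.infDist y (Γ : Set (EuclideanSpace ℝ (Fin d))) ^ p ∂μ) ^ (1 / p) }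
    with hAdef
  have hq : ∀ n, quantError μ p n = sInf (A n) := fun n => rfl
  have hmem0 : ∀ n, ∀ e ∈ A n, (0:ℝ) ≤ e := by
    rintro n e ⟨Γ, _, _, rfl⟩
    exact Real.rpow_nonneg
      (integral_nonneg fun y => Real.rpow_nonneg infDist_nonneg _) _
  have hBdd : ∀ n, BddBelow (A n) := fun n => ⟨0, fun e he => hmem0 n e he⟩
  obtain ⟨x₀, hx₀⟩ := hSne
  have hne : ∀ n, 1 ≤ n → (A n).Nonempty := by
    intro n hn
    exact ⟨_, ⟨{x₀}, Finset.singleton_nonempty x₀, by simpa using hn, rfl⟩⟩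
  by_contra hcon
  push_neg at hcon
  rw [hq, hq] at hcon
  set D := sInf (A (N - 1)) with hDdef
  have hD0 : 0 ≤ D := le_csInf (hne (N - 1) (by omega)) (fun e he => hmem0 _ e he)
  have hlb : ∀ e ∈ A (N - 1), (D ^ p + δ) ^ (1 / p) ≤ e := by
    rintro e ⟨Γ, hΓne, hΓcard, rfl⟩
    obtain ⟨Γ', hΓ'ne, hΓ'card, hint⟩ := key Γ hΓne hΓcard
    have hmem : ((∫ y, infDist y (Γ' : Set (EuclideanSpace ℝ (Fin d))) ^ p ∂μ) ^ (1 / p)) ∈ A N :=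
      ⟨Γ', hΓ'ne, hΓ'card, rfl⟩
    have hInt'0 : 0 ≤ ∫ y, infDist y (Γ' : Set (EuclideanSpace ℝ (Fin d))) ^ p ∂μ :=
      integral_nonneg fun y => Real.rpow_nonneg infDist_nonneg _
    have hInt0 : 0 ≤ ∫ y, infDist y (Γ : Set (EuclideanSpace ℝ (Fin d))) ^ p ∂μ :=
      integral_nonneg fun y => Real.rpow_nonneg infDist_nonneg _
    have h1 : D ≤ (∫ y, infDist y (Γ' : Set (EuclideanSpace ℝ (Fin d))) ^ p ∂μ) ^ (1 / p) :=
      hcon.trans (csInf_le (hBdd N) hmem)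
    have h2 : D ^ p ≤ ∫ y, infDist y (Γ' : Set (EuclideanSpace ℝ (Fin d))) ^ p ∂μ := by
      have h := Real.rpow_le_rpow hD0 h1 hp0.le
      rwa [one_div, Real.rpow_inv_rpow hInt'0 hp0.ne'] at h
    have h3 : D ^ p + δ ≤ ∫ y, infDist y (Γ : Set (EuclideanSpace ℝ (Fin d))) ^ p ∂μ := by
      linarith
    have h4 := Real.rpow_le_rpow
      (by positivity : (0:ℝ) ≤ D ^ p + δ) h3 (by positivity : (0:ℝ) ≤ 1 / p)
    exact h4
  have h8 : (D ^ p + δ) ^ (1 / p) ≤ D := le_csInf (hne (N - 1) (by omega)) hlb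
  have h9 : D < (D ^ p + δ) ^ (1 / p) := by
    have h10 : D ^ p < D ^ p + δ := by linarith
    rw [one_div]
    have h := Real.rpow_lt_rpow (Real.rpow_nonneg hD0 p) h10 (by positivity : (0:ℝ) < p⁻¹)
    rwa [Real.rpow_rpow_inv hD0 hp0.ne'] at h
  linarith
end

section
/- For a random vector E in ℝ^d with finite p-th moment and any level N ≥ 1, an L^p optimal quantizer exists: there is a set Γ* ⊂ ℝ^d with |Γ*| ≤ N achieving the infimum of (E[min_{a∈Γ} |E - a|^p])^{1/p} over all sets Γ of cardinality at most N. -/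
open MeasureTheory Metric
open scoped Topology ENNReal

section Helpers


variable {ι α : Type*} [TopologicalSpace α]

lemma continuous_finset_inf' (s : Finset ι) (hs : s.Nonempty) (f : ι → α → ℝ)
    (hf : ∀ i, Continuous (f i)) : Continuous (fun x => s.inf' hs (fun i => f i x)) := by
  induction hs using Finset.Nonempty.cons_induction with
  | singleton i => simpa [Finset.inf'_singleton] using hf i
  | cons i s hi hs ih =>
      have heq : (fun x => (Finset.cons i s hi).inf' (Finset.cons_nonempty hi)
          (fun j => f j x)) = fun x => min (f i x) (s.inf' hs (fun j => f j x)) := by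
        funext x
        rw [Finset.inf'_cons]
      rw [heq]
      exact (hf i).min ih

end Helpers


namespace QuantAux

variable {d : ℕ}

abbrev Pt (d : ℕ) := EuclideanSpace ℝ (Fin d)

variable (μ : Measure (Pt d)) [IsProbabilityMeasure μ] (p : ℝ)

/-- distortion of a codebook -/
noncomputable def D (Γ : Finset (Pt d)) : ℝ := ∫ y, infDist y (Γ : Set (Pt d)) ^ p ∂μ

variable {μ p}

lemma hp0 (hp : 1 ≤ p) : 0 < p := lt_of_lt_of_le one_pos hp

lemma cont_rpow (hp : 1 ≤ p) : Continuous (fun x : ℝ => x ^ p) := by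
  rw [continuous_iff_continuousAt]
  exact fun x => Real.continuousAt_rpow_const x p (Or.inr (hp0 hp).le)

lemma rpow_add_le (hp : 1 ≤ p) {x c : ℝ} (hx : 0 ≤ x) (hc : 0 ≤ c) :
    (x + c) ^ p ≤ 2 ^ p * x ^ p + 2 ^ p * c ^ p := by
  have h1 : x + c ≤ 2 * max x c := by
    rcases le_total x c with h | h
    · calc x + c ≤ c + c := by linarith
      _ = 2 * c := by ring
      _ ≤ 2 * max x c := by rw [max_eq_right h]
    · calc x + c ≤ x + x := by linarith
      _ = 2 * x := by ring
      _ ≤ 2 * max x c := by rw [max_eq_left h]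
  have h2 : (x + c) ^ p ≤ (2 * max x c) ^ p :=
    Real.rpow_le_rpow (by positivity) h1 (le_of_lt (hp0 hp))
  have h3 : (2 * max x c : ℝ) ^ p = 2 ^ p * (max x c) ^ p :=
    Real.mul_rpow (by norm_num) (le_max_of_le_left hx)
  have h4 : (max x c) ^ p ≤ x ^ p + c ^ p := by
    rcases le_total x c with h | h
    · rw [max_eq_right h]
      have := Real.rpow_nonneg hx p
      linarith
    · rw [max_eq_left h]
      have := Real.rpow_nonneg hc p
      linarith
  calc (x + c) ^ p ≤ 2 ^ p * (max x c) ^ p := h3 ▸ h2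
    _ ≤ 2 ^ p * (x ^ p + c ^ p) := by
        have : (0:ℝ) ≤ 2 ^ p := Real.rpow_nonneg (by norm_num) p
        nlinarith
    _ = 2 ^ p * x ^ p + 2 ^ p * c ^ p := by ring

lemma exists_infDist_eq (Γ : Finset (Pt d)) (hΓ : Γ.Nonempty) (y : Pt d) :
    ∃ z ∈ Γ, infDist y (Γ : Set (Pt d)) = dist y z := by
  exact Γ.finite_toSet.isCompact.exists_infDist_eq_dist (by exact_mod_cast hΓ) y

lemma integrand_nonneg (Γ : Finset (Pt d)) (y : Pt d) : 0 ≤ infDist y (Γ : Set (Pt d)) ^ p :=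
  Real.rpow_nonneg infDist_nonneg p

lemma integrand_cont (hp : 1 ≤ p) (Γ : Finset (Pt d)) :
    Continuous (fun y : Pt d => infDist y (Γ : Set (Pt d)) ^ p) :=
  (cont_rpow hp).comp (continuous_infDist_pt _)

lemma integrable_bound (hp : 1 ≤ p) (hmom : Integrable (fun y : Pt d => ‖y‖ ^ p) μ)
    (C : ℝ) : Integrable (fun y : Pt d => 2 ^ p * ‖y‖ ^ p + 2 ^ p * C ^ p) μ := by
  exact (hmom.const_mul _).add (integrable_const _)

lemma integrable_integrand (hp : 1 ≤ p) (hmom : Integrable (fun y : Pt d => ‖y‖ ^ p) μ)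
    (Γ : Finset (Pt d)) (hΓ : Γ.Nonempty) :
    Integrable (fun y : Pt d => infDist y (Γ : Set (Pt d)) ^ p) μ := by
  obtain ⟨z, hz⟩ := hΓ
  refine (integrable_bound hp hmom ‖z‖).mono
    ((integrand_cont hp Γ).aestronglyMeasurable) ?_
  filter_upwards with y
  have h1 : infDist y (Γ : Set (Pt d)) ≤ ‖y‖ + ‖z‖ := by
    calc infDist y (Γ : Set (Pt d)) ≤ dist y z := infDist_le_dist_of_mem (by exact_mod_cast hz)
      _ ≤ ‖y‖ + ‖z‖ := by
        rw [dist_eq_norm]; exact (norm_sub_le _ _)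
  have h2 : infDist y (Γ : Set (Pt d)) ^ p ≤ (‖y‖ + ‖z‖) ^ p :=
    Real.rpow_le_rpow infDist_nonneg h1 (le_of_lt (hp0 hp))
  have h3 := rpow_add_le hp (norm_nonneg y) (norm_nonneg z)
  rw [Real.norm_of_nonneg (integrand_nonneg Γ y), Real.norm_of_nonneg]
  · linarith
  · positivity

lemma D_nonneg (Γ : Finset (Pt d)) : 0 ≤ D μ p Γ :=
  integral_nonneg (fun y => integrand_nonneg Γ y)

lemma D_mono (hp : 1 ≤ p) (hmom : Integrable (fun y : Pt d => ‖y‖ ^ p) μ)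
    {C Γ : Finset (Pt d)} (hC : C ⊆ Γ) (hCne : C.Nonempty) : D μ p Γ ≤ D μ p C := by
  refine integral_mono (integrable_integrand hp hmom Γ (hCne.mono hC))
    (integrable_integrand hp hmom C hCne) (fun y => ?_)
  exact Real.rpow_le_rpow infDist_nonneg
    (infDist_le_infDist_of_subset (by exact_mod_cast hC) (by exact_mod_cast hCne))
    (le_of_lt (hp0 hp))





lemma inf'_eq_infDist {N : ℕ} [NeZero N] (a : Fin N → Pt d) (y : Pt d) :
    Finset.univ.inf' Finset.univ_nonempty (fun i => dist y (a i))
      = infDist y (Set.range a) := by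
  apply le_antisymm
  · obtain ⟨z, ⟨i, rfl⟩, hz⟩ :=
      ((Set.finite_range a).isCompact).exists_infDist_eq_dist (Set.range_nonempty a) y
    rw [hz]
    exact Finset.inf'_le _ (Finset.mem_univ i)
  · apply Finset.le_inf'
    intro i _
    exact infDist_le_dist_of_mem ⟨i, rfl⟩

lemma range_eq_coe_image {N : ℕ} [DecidableEq (Pt d)] (a : Fin N → Pt d) :
    Set.range a = ((Finset.univ.image a : Finset (Pt d)) : Set (Pt d)) := by
  simp

/-- fill a codebook of card ≤ N into an N-tuple -/
lemma bridge {N : ℕ} (Γ : Finset (Pt d)) (hne : Γ.Nonempty) (hcard : Γ.card ≤ N) :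
    ∃ a : Fin N → Pt d, Set.range a = (Γ : Set (Pt d)) := by
  obtain ⟨z, hz⟩ := hne
  refine ⟨fun i => if h : (i : ℕ) < Γ.card then (Γ.equivFin.symm ⟨i, h⟩ : Pt d) else z, ?_⟩
  apply Set.eq_of_subset_of_subset
  · rintro x ⟨i, rfl⟩
    by_cases h : (i : ℕ) < Γ.card
    · simp only [dif_pos h]
      exact (Γ.equivFin.symm ⟨(i : ℕ), h⟩).2
    · simp only [dif_neg h]; exact hz
  · intro x hx
    set j := Γ.equivFin ⟨x, hx⟩ with hj
    have hjN : (j : ℕ) < N := lt_of_lt_of_le j.2 hcard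
    refine ⟨⟨(j : ℕ), hjN⟩, ?_⟩
    have h : ((⟨(j : ℕ), hjN⟩ : Fin N) : ℕ) < Γ.card := j.2
    simp only [dif_pos h]
    have : (⟨((⟨(j : ℕ), hjN⟩ : Fin N) : ℕ), h⟩ : Fin Γ.card) = j := by
      apply Fin.ext; rfl
    rw [this, hj, Equiv.symm_apply_apply]




noncomputable def tail (μ : Measure (Pt d)) (p : ℝ) (T : ℝ) : ℝ := ∫ y in {y : Pt d | T < ‖y‖}, ‖y‖ ^ p ∂μ


lemma meas_tailset (T : ℝ) : MeasurableSet {y : Pt d | T < ‖y‖} :=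
  measurableSet_lt measurable_const continuous_norm.measurable

lemma tail_eq (T : ℝ) :
    tail μ p T = ∫ y, Set.indicator {y : Pt d | T < ‖y‖} (fun y => ‖y‖ ^ p) y ∂μ := by
  rw [integral_indicator (meas_tailset T)]; rfl

lemma tail_tendsto (hp : 1 ≤ p) (hmom : Integrable (fun y : Pt d => ‖y‖ ^ p) μ) :
    Filter.Tendsto (tail μ p) Filter.atTop (𝓝 0) := by
  have hrc : Continuous (fun x : ℝ => x ^ p) := by
    rw [continuous_iff_continuousAt]
    exact fun x => Real.continuousAt_rpow_const x p (Or.inr (by linarith))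
  have h := tendsto_integral_filter_of_dominated_convergence
    (μ := μ) (l := Filter.atTop (α := ℝ))
    (F := fun T y => Set.indicator {y : Pt d | T < ‖y‖} (fun y => ‖y‖ ^ p) y)
    (f := fun _ => (0:ℝ)) (bound := fun y => ‖y‖ ^ p)
    ?_ ?_ hmom ?_
  · simp only [integral_zero] at h
    exact Filter.Tendsto.congr (fun T => (tail_eq T).symm) h
  · filter_upwards with T
    exact ((Continuous.aestronglyMeasurable (hrc.comp continuous_norm)).indicator (meas_tailset T))
  · filter_upwards with T
    filter_upwards with y
    rw [Real.norm_of_nonneg (Set.indicator_nonneg (fun y _ => Real.rpow_nonneg (norm_nonneg y) p) y)]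
    exact Set.indicator_le_self' (fun y _ => Real.rpow_nonneg (norm_nonneg y) p) y
  · filter_upwards with y
    have : ∀ᶠ T in Filter.atTop (α := ℝ),
        Set.indicator {y : Pt d | T < ‖y‖} (fun y => ‖y‖ ^ p) y = 0 := by
      filter_upwards [Filter.eventually_ge_atTop ‖y‖] with T hT
      exact Set.indicator_of_notMem (by simp [Set.mem_setOf_eq, not_lt, hT]) _
    exact Filter.Tendsto.congr' (this.mono fun T h => h.symm) tendsto_const_nhds

lemma tail_small (hp : 1 ≤ p) (hmom : Integrable (fun y : Pt d => ‖y‖ ^ p) μ)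
    {ε : ℝ} (hε : 0 < ε) : ∃ T, 0 ≤ T ∧ ∀ T' ≥ T, tail μ p T' < ε := by
  have h := (tail_tendsto hp hmom).eventually (eventually_lt_nhds hε)
  obtain ⟨T, hT⟩ := h.exists_forall_of_atTop
  exact ⟨max T 0, le_max_right _ _, fun T' hT' => hT T' (le_trans (le_max_left _ _) hT')⟩

lemma half_ball : ∃ r : ℝ, 0 ≤ r ∧ (1:ℝ)/2 ≤ (μ (closedBall (0 : Pt d) r)).toReal := by
  have hmono : Monotone (fun n : ℕ => closedBall (0 : Pt d) n) := fun m n hmn =>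
    closedBall_subset_closedBall (by exact_mod_cast hmn)
  have hunion : (⋃ n : ℕ, closedBall (0 : Pt d) n) = Set.univ := by
    ext x
    simp only [Set.mem_iUnion, Set.mem_univ, iff_true]
    obtain ⟨n, hn⟩ := exists_nat_ge ‖x‖
    exact ⟨n, by simpa [mem_closedBall, dist_zero_right] using hn⟩
  have ht := tendsto_measure_iUnion_atTop (μ := μ) hmono
  rw [hunion, measure_univ] at ht
  have : ∀ᶠ n : ℕ in Filter.atTop, (1/2 : ℝ≥0∞) < μ (closedBall (0 : Pt d) n) :=
    ht.eventually (eventually_gt_nhds (by norm_num))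
  obtain ⟨n, hn⟩ := this.exists
  refine ⟨n, Nat.cast_nonneg n, ?_⟩
  have h2 : ((1:ℝ≥0∞)/2).toReal ≤ (μ (closedBall (0 : Pt d) n)).toReal :=
    ENNReal.toReal_mono (measure_ne_top μ _) hn.le
  simpa using h2


lemma far_lower (hp : 1 ≤ p) (hmom : Integrable (fun y : Pt d => ‖y‖ ^ p) μ)
    {r ρ : ℝ} (hr : 0 ≤ r) (hrρ : r ≤ ρ) (Γ : Finset (Pt d)) (hΓ : Γ.Nonempty)
    (hfar : ∀ x ∈ Γ, ρ < ‖x‖) :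
    (ρ - r) ^ p * (μ (closedBall (0 : Pt d) r)).toReal ≤ D μ p Γ := by
  have key : ∀ y ∈ closedBall (0 : Pt d) r, (ρ - r) ^ p ≤ infDist y (Γ : Set (Pt d)) ^ p := by
    intro y hy
    have hy' : ‖y‖ ≤ r := by rwa [mem_closedBall, dist_zero_right] at hy
    obtain ⟨z, hzΓ, hz⟩ := exists_infDist_eq Γ hΓ y
    have h1 : ρ - r ≤ dist y z := by
      have h2 : ‖z‖ - ‖y‖ ≤ ‖z - y‖ := norm_sub_norm_le _ _
      have h3 : dist y z = ‖z - y‖ := by rw [dist_eq_norm, norm_sub_rev]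
      have := hfar z hzΓ
      linarith
    rw [hz]
    exact Real.rpow_le_rpow (by linarith) h1 (le_of_lt (hp0 hp))
  have hconst : IntegrableOn (fun _ : Pt d => (ρ - r) ^ p) (closedBall (0 : Pt d) r) μ :=
    integrableOn_const
  have hint := integrable_integrand hp hmom Γ hΓ
  calc (ρ - r) ^ p * (μ (closedBall (0 : Pt d) r)).toReal
      = ∫ _ in closedBall (0 : Pt d) r, (ρ - r) ^ p ∂μ := by
        rw [setIntegral_const, smul_eq_mul, mul_comm]; rfl
    _ ≤ ∫ y in closedBall (0 : Pt d) r, infDist y (Γ : Set (Pt d)) ^ p ∂μ :=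
        setIntegral_mono_on hconst hint.integrableOn measurableSet_closedBall key
    _ ≤ D μ p Γ :=
        setIntegral_le_integral hint (Filter.Eventually.of_forall fun y => integrand_nonneg Γ y)

lemma surgery (hp : 1 ≤ p) (hmom : Integrable (fun y : Pt d => ‖y‖ ^ p) μ)
    {ρ T : ℝ} (hρ : 0 ≤ ρ) (hρT : ρ ≤ T) (Γ C : Finset (Pt d)) (hCΓ : C ⊆ Γ)
    (hz : ∃ z ∈ C, ‖z‖ ≤ ρ) (hfar : ∀ w ∈ Γ, w ∉ C → ρ + 2 * T ≤ ‖w‖) :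
    D μ p C ≤ D μ p Γ + 2 ^ p * tail μ p T := by
  obtain ⟨z, hzC, hzρ⟩ := hz
  have hCne : C.Nonempty := ⟨z, hzC⟩
  have hΓne : Γ.Nonempty := hCne.mono hCΓ
  have hpt : ∀ y : Pt d, infDist y (C : Set (Pt d)) ^ p ≤ infDist y (Γ : Set (Pt d)) ^ p
      + Set.indicator {y : Pt d | T < ‖y‖} (fun y => 2 ^ p * ‖y‖ ^ p) y := by
    intro y
    have hind0 : 0 ≤ Set.indicator {y : Pt d | T < ‖y‖} (fun y => 2 ^ p * ‖y‖ ^ p) y :=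
      Set.indicator_nonneg (fun y _ => by positivity) y
    obtain ⟨w, hwΓ, hw⟩ := exists_infDist_eq Γ hΓne y
    by_cases hwC : w ∈ C
    · have h1 : infDist y (C : Set (Pt d)) ≤ dist y w :=
        infDist_le_dist_of_mem (by exact_mod_cast hwC)
      have h2 : infDist y (C : Set (Pt d)) ^ p ≤ infDist y (Γ : Set (Pt d)) ^ p := by
        rw [hw]; exact Real.rpow_le_rpow infDist_nonneg h1 (le_of_lt (hp0 hp))
      linarith
    · have hwfar : ρ + 2 * T ≤ ‖w‖ := hfar w hwΓ hwC
      have hdistC : infDist y (C : Set (Pt d)) ≤ ‖y‖ + ρ := by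
        calc infDist y (C : Set (Pt d)) ≤ dist y z :=
              infDist_le_dist_of_mem (by exact_mod_cast hzC)
          _ ≤ ‖y‖ + ‖z‖ := by rw [dist_eq_norm]; exact norm_sub_le _ _
          _ ≤ ‖y‖ + ρ := by linarith
      by_cases hyT : ‖y‖ ≤ T
      · have h1 : infDist y (C : Set (Pt d)) ≤ infDist y (Γ : Set (Pt d)) := by
          rw [hw]
          have h2 : ‖w‖ - ‖y‖ ≤ dist y w := by
            rw [dist_eq_norm, norm_sub_rev]
            exact (norm_sub_norm_le _ _).trans (le_refl _)
          calc infDist y (C : Set (Pt d)) ≤ ‖y‖ + ρ := hdistC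
            _ ≤ ρ + 2 * T - ‖y‖ := by linarith
            _ ≤ ‖w‖ - ‖y‖ := by linarith
            _ ≤ dist y w := h2
        have h2 : infDist y (C : Set (Pt d)) ^ p ≤ infDist y (Γ : Set (Pt d)) ^ p :=
          Real.rpow_le_rpow infDist_nonneg h1 (le_of_lt (hp0 hp))
        linarith
      · push_neg at hyT
        have hmem : y ∈ {y : Pt d | T < ‖y‖} := hyT
        have h1 : infDist y (C : Set (Pt d)) ^ p ≤ 2 ^ p * ‖y‖ ^ p := by
          have h2 : infDist y (C : Set (Pt d)) ≤ 2 * ‖y‖ := by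
            calc infDist y (C : Set (Pt d)) ≤ ‖y‖ + ρ := hdistC
              _ ≤ ‖y‖ + T := by linarith
              _ ≤ ‖y‖ + ‖y‖ := by linarith
              _ = 2 * ‖y‖ := by ring
          calc infDist y (C : Set (Pt d)) ^ p ≤ (2 * ‖y‖) ^ p :=
                Real.rpow_le_rpow infDist_nonneg h2 (le_of_lt (hp0 hp))
            _ = 2 ^ p * ‖y‖ ^ p := Real.mul_rpow (by norm_num) (norm_nonneg y)
        rw [Set.indicator_of_mem hmem]
        have := integrand_nonneg (p := p) Γ y
        linarith
  have hind : Integrable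
      (fun y => Set.indicator {y : Pt d | T < ‖y‖} (fun y : Pt d => 2 ^ p * ‖y‖ ^ p) y) μ := by
    exact (hmom.const_mul _).indicator (meas_tailset T)
  have h := integral_mono (integrable_integrand hp hmom C hCne)
    ((integrable_integrand hp hmom Γ hΓne).add hind) hpt
  simp only [Pi.add_apply] at h
  rw [integral_add (integrable_integrand hp hmom Γ hΓne) hind] at h
  have h2 : (∫ y, Set.indicator {y : Pt d | T < ‖y‖} (fun y : Pt d => 2 ^ p * ‖y‖ ^ p) y ∂μ)
      = 2 ^ p * tail μ p T := by
    rw [integral_indicator (meas_tailset T)]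
    unfold tail
    rw [← integral_const_mul]
  calc D μ p C ≤ _ := h
    _ = D μ p Γ + 2 ^ p * tail μ p T := by rw [h2]; rfl

variable (μ p)

noncomputable def G {N : ℕ} [NeZero N] (a : Fin N → Pt d) : ℝ :=
  ∫ y, (Finset.univ.inf' Finset.univ_nonempty (fun i => dist y (a i))) ^ p ∂μ

/-- achievable distortions at level `N` -/
def V (N : ℕ) : Set ℝ :=
  {v : ℝ | ∃ Γ : Finset (Pt d), Γ.Nonempty ∧ Γ.card ≤ N ∧ v = D μ p Γ}

variable {μ p}

lemma G_eq {N : ℕ} [NeZero N] (a : Fin N → Pt d) :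
    G μ p a = ∫ y, infDist y (Set.range a) ^ p ∂μ := by
  unfold G
  congr 1
  funext y
  rw [inf'_eq_infDist]

lemma V_nonempty (N : ℕ) (hN : 1 ≤ N) : (V μ p N).Nonempty :=
  ⟨D μ p {0}, {0}, Finset.singleton_nonempty _, by simpa using hN, rfl⟩

lemma V_bddBelow (N : ℕ) : BddBelow (V μ p N) := by
  refine ⟨0, ?_⟩
  rintro v ⟨Γ, -, -, rfl⟩
  exact D_nonneg Γ

lemma G_cont (hp : 1 ≤ p) (hmom : Integrable (fun y : Pt d => ‖y‖ ^ p) μ)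
    {N : ℕ} [NeZero N] : Continuous (G μ p (N := N) (d := d)) := by
  rw [continuous_iff_continuousAt]
  intro a₀
  set i₀ : Fin N := ⟨0, Nat.pos_of_ne_zero (NeZero.ne N)⟩
  set C : ℝ := ‖a₀ i₀‖ + 1 with hC
  have hC0 : 0 ≤ C := by positivity
  apply continuousAt_of_dominated (bound := fun y => 2 ^ p * ‖y‖ ^ p + 2 ^ p * C ^ p)
  · filter_upwards with a
    refine Continuous.aestronglyMeasurable ?_
    exact (cont_rpow hp).comp
      (continuous_finset_inf' _ Finset.univ_nonempty _ (fun i => continuous_id.dist continuous_const))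
  · filter_upwards [Metric.ball_mem_nhds a₀ one_pos] with a ha
    filter_upwards with y
    have hnn : 0 ≤ Finset.univ.inf' Finset.univ_nonempty (fun i => dist y (a i)) :=
      Finset.le_inf' _ _ (fun i _ => dist_nonneg)
    rw [Real.norm_of_nonneg (Real.rpow_nonneg hnn p)]
    have h1 : Finset.univ.inf' Finset.univ_nonempty (fun i => dist y (a i)) ≤ ‖y‖ + C := by
      calc Finset.univ.inf' Finset.univ_nonempty (fun i => dist y (a i))
          ≤ dist y (a i₀) := Finset.inf'_le _ (Finset.mem_univ i₀)
        _ ≤ dist y (a₀ i₀) + dist (a₀ i₀) (a i₀) := dist_triangle _ _ _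
        _ ≤ (‖y‖ + ‖a₀ i₀‖) + dist (a₀ i₀) (a i₀) := by
            have : dist y (a₀ i₀) ≤ ‖y‖ + ‖a₀ i₀‖ := by
              rw [dist_eq_norm]; exact norm_sub_le _ _
            linarith
        _ ≤ ‖y‖ + C := by
            have h2 : dist (a₀ i₀) (a i₀) ≤ dist a₀ a := dist_le_pi_dist a₀ a i₀
            have h3 : dist a₀ a < 1 := by rw [dist_comm]; exact ha
            rw [hC]; linarith
    calc (Finset.univ.inf' Finset.univ_nonempty (fun i => dist y (a i))) ^ p
        ≤ (‖y‖ + C) ^ p := Real.rpow_le_rpow hnn h1 (le_of_lt (hp0 hp))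
      _ ≤ 2 ^ p * ‖y‖ ^ p + 2 ^ p * C ^ p := rpow_add_le hp (norm_nonneg y) hC0
  · exact integrable_bound hp hmom C
  · filter_upwards with y
    refine Continuous.continuousAt ?_
    exact (cont_rpow hp).comp
      (continuous_finset_inf' _ Finset.univ_nonempty _
        (fun i => continuous_const.dist (continuous_apply i)))

lemma exists_min (hp : 1 ≤ p) (hmom : Integrable (fun y : Pt d => ‖y‖ ^ p) μ)
    {N : ℕ} (hN : 1 ≤ N) {ε R : ℝ} (hε : 0 < ε) (hR : 0 ≤ R)
    (hconf : ∀ Γ : Finset (Pt d), Γ.Nonempty → Γ.card ≤ N →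
      D μ p Γ < sInf (V μ p N) + ε → (Γ : Set (Pt d)) ⊆ closedBall (0 : Pt d) R) :
    ∃ Γs : Finset (Pt d), Γs.Nonempty ∧ Γs.card ≤ N ∧
      ∀ Γ : Finset (Pt d), Γ.Nonempty → Γ.card ≤ N → D μ p Γs ≤ D μ p Γ := by
  classical
  haveI : NeZero N := ⟨by omega⟩
  set m := sInf (V μ p N) with hm
  set K : Set (Fin N → Pt d) := Set.univ.pi (fun _ => closedBall (0 : Pt d) R) with hK
  have hKc : IsCompact K := isCompact_univ_pi (fun _ => isCompact_closedBall _ _)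
  have hKne : K.Nonempty := ⟨fun _ => 0, fun i _ => mem_closedBall_self hR⟩
  obtain ⟨as, hasK, hmin⟩ := hKc.exists_isMinOn hKne (G_cont hp hmom).continuousOn
  set Γs : Finset (Pt d) := Finset.image as Finset.univ with hΓs
  have hΓsne : Γs.Nonempty := Finset.Nonempty.image Finset.univ_nonempty as
  have hΓscard : Γs.card ≤ N := le_trans (Finset.card_image_le) (by simp)
  have hDG : D μ p Γs = G μ p as := by
    rw [G_eq]
    unfold D
    congr 1
    funext y
    rw [range_eq_coe_image]
  refine ⟨Γs, hΓsne, hΓscard, fun Γ hΓne hΓcard => ?_⟩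
  have hmle : m ≤ D μ p Γ := csInf_le (V_bddBelow N) ⟨Γ, hΓne, hΓcard, rfl⟩
  have hDle : D μ p Γs ≤ m := by
    by_contra hlt
    push_neg at hlt
    have hm2 : m < min (D μ p Γs) (m + ε) := lt_min hlt (by linarith)
    obtain ⟨v, hvV, hvlt⟩ := exists_lt_of_csInf_lt (V_nonempty N hN) hm2
    obtain ⟨Γ', hΓ'ne, hΓ'card, rfl⟩ := hvV
    have hsub := hconf Γ' hΓ'ne hΓ'card (lt_of_lt_of_le hvlt (min_le_right _ _))
    obtain ⟨a, ha⟩ := bridge Γ' hΓ'ne hΓ'card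
    have haK : a ∈ K := by
      intro i _
      apply hsub
      rw [← ha]
      exact ⟨i, rfl⟩
    have hGa : G μ p a = D μ p Γ' := by
      rw [G_eq]
      unfold D
      congr 1
      funext y
      rw [ha]
    have h4 := isMinOn_iff.mp hmin a haK
    rw [hGa, ← hDG] at h4
    have h3 := lt_of_lt_of_le hvlt (min_le_left _ _)
    linarith
  linarith

lemma keyP (hp : 1 ≤ p) (hmom : Integrable (fun y : Pt d => ‖y‖ ^ p) μ) :
    ∀ N : ℕ, 1 ≤ N → ∃ Γs : Finset (Pt d), Γs.Nonempty ∧ Γs.card ≤ N ∧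
      ∀ Γ : Finset (Pt d), Γ.Nonempty → Γ.card ≤ N → D μ p Γs ≤ D μ p Γ := by
  intro N
  induction N with
  | zero => omega
  | succ n ih =>
    intro _
    obtain ⟨r, hr0, hrμ⟩ := half_ball (μ := μ)
    have hp0' : 0 < p := hp0 hp
    rcases Nat.eq_zero_or_pos n with hn0 | hn1
    · -- base case N = 1
      subst hn0
      set m := sInf (V μ p 1) with hm
      set M0 := D μ p ({0} : Finset (Pt d)) with hM0
      have hmM0 : m ≤ M0 := csInf_le (V_bddBelow 1) ⟨{0}, Finset.singleton_nonempty _, by simp, rfl⟩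
      have hM00 : 0 ≤ M0 := D_nonneg _
      set ρ := r + (2 * (M0 + 1)) ^ p⁻¹ with hρ
      have hρr : r ≤ ρ := le_add_of_nonneg_right (Real.rpow_nonneg (by linarith) _)
      have hpow : (ρ - r) ^ p = 2 * (M0 + 1) := by
        rw [hρ]
        simp only [add_sub_cancel_left]
        exact Real.rpow_inv_rpow (by linarith) (ne_of_gt hp0')
      apply exists_min hp hmom le_rfl one_pos (le_trans hr0 hρr)
      intro Γ hne hcard hD x hx
      rw [mem_closedBall, dist_zero_right]
      by_contra hxρ
      push_neg at hxρ
      have hfar : ∀ w ∈ Γ, ρ < ‖w‖ := by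
        intro w hw
        have hxΓ : x ∈ Γ := by exact_mod_cast hx
        have := Finset.card_le_one.mp hcard w hw x hxΓ
        rwa [this]
      have hlow := far_lower hp hmom hr0 hρr Γ hne hfar
      have h1 : (ρ - r) ^ p * (1/2 : ℝ) ≤ (ρ - r) ^ p * (μ (closedBall (0 : Pt d) r)).toReal :=
        mul_le_mul_of_nonneg_left hrμ (Real.rpow_nonneg (by linarith) _)
      rw [hpow] at h1 hlow
      rw [← hm] at hD
      linarith
    · -- inductive step
      obtain ⟨Γ₀, hΓ₀ne, hΓ₀card, hΓ₀min⟩ := ih hn1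
      by_cases hcase : ∀ Γ : Finset (Pt d), Γ.Nonempty → Γ.card ≤ n + 1 → D μ p Γ₀ ≤ D μ p Γ
      · exact ⟨Γ₀, hΓ₀ne, le_trans hΓ₀card (Nat.le_succ n), hcase⟩
      push_neg at hcase
      obtain ⟨Γ₁, hΓ₁ne, hΓ₁card, hΓ₁lt⟩ := hcase
      set m := sInf (V μ p (n + 1)) with hm
      have hmΓ₁ : m ≤ D μ p Γ₁ := csInf_le (V_bddBelow _) ⟨Γ₁, hΓ₁ne, hΓ₁card, rfl⟩
      set δ := D μ p Γ₀ - m with hδdef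
      have hδ : 0 < δ := by have := hΓ₁lt; simp only [hδdef]; linarith
      have hD₀0 : 0 ≤ D μ p Γ₀ := D_nonneg _
      set ρ := r + (2 * (D μ p Γ₀ + 1)) ^ p⁻¹ with hρ
      have hρr : r ≤ ρ := le_add_of_nonneg_right (Real.rpow_nonneg (by linarith) _)
      have hρ0 : 0 ≤ ρ := le_trans hr0 hρr
      have hpow : (ρ - r) ^ p = 2 * (D μ p Γ₀ + 1) := by
        rw [hρ]
        simp only [add_sub_cancel_left]
        exact Real.rpow_inv_rpow (by linarith) (ne_of_gt hp0')
      have h2p : (0:ℝ) < 2 ^ p := Real.rpow_pos_of_pos (by norm_num) p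
      obtain ⟨T₀, hT₀0, hT⟩ := tail_small hp hmom (ε := δ / 2 / 2 ^ p) (by positivity)
      set T := max T₀ ρ with hTdef
      have hρT : ρ ≤ T := le_max_right _ _
      set R := ρ + 2 * T with hR
      have hT0 : 0 ≤ T := le_trans hρ0 hρT
      have hρR : ρ ≤ R := by simp only [hR]; linarith
      apply exists_min hp hmom (by omega) (half_pos hδ) (R := R) (by linarith)
      intro Γ hne hcard hD
      by_contra hnot
      obtain ⟨w, hwmem, hwball⟩ := Set.not_subset.mp hnot
      have hwΓ : w ∈ Γ := by exact_mod_cast hwmem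
      have hwR : R < ‖w‖ := by
        by_contra h
        push_neg at h
        exact hwball (by rwa [mem_closedBall, dist_zero_right])
      -- there is a point of Γ within ρ of the origin
      have hz : ∃ z ∈ Γ, ‖z‖ ≤ ρ := by
        by_contra hzno
        push_neg at hzno
        have hlow := far_lower hp hmom hr0 hρr Γ hne hzno
        have h1 : (ρ - r) ^ p * (1/2 : ℝ) ≤ (ρ - r) ^ p * (μ (closedBall (0 : Pt d) r)).toReal :=
          mul_le_mul_of_nonneg_left hrμ (Real.rpow_nonneg (by linarith) _)
        rw [hpow] at h1 hlow
        rw [← hm] at hD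
        have hmd : m + δ = D μ p Γ₀ := by rw [hδdef]; ring
        linarith
      obtain ⟨z, hzΓ, hzρ⟩ := hz
      classical
      set C := Γ.filter (fun x => ‖x‖ ≤ R) with hCdef
      have hzC : z ∈ C := Finset.mem_filter.mpr ⟨hzΓ, by linarith⟩
      have hCΓ : C ⊆ Γ := Finset.filter_subset _ _
      have hwC : w ∉ C := by
        intro hw
        have := (Finset.mem_filter.mp hw).2
        linarith
      have hCcard : C.card ≤ n := by
        have hss : C ⊂ Γ := (Finset.ssubset_iff_of_subset hCΓ).mpr ⟨w, hwΓ, hwC⟩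
        have := Finset.card_lt_card hss
        omega
      have hfar : ∀ w' ∈ Γ, w' ∉ C → ρ + 2 * T ≤ ‖w'‖ := by
        intro w' hw' hw'C
        have h5 : ¬ ‖w'‖ ≤ R := fun h => hw'C (Finset.mem_filter.mpr ⟨hw', h⟩)
        have h6 := not_le.mp h5
        rw [hR] at h6
        linarith
      have hsurg := surgery hp hmom hρ0 hρT Γ C hCΓ ⟨z, hzC, hzρ⟩ hfar
      have htail : tail μ p T < δ / 2 / 2 ^ p := hT T (le_max_left _ _)
      have htail2 : 2 ^ p * tail μ p T < δ / 2 := by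
        have := mul_lt_mul_of_pos_left htail h2p
        calc 2 ^ p * tail μ p T < 2 ^ p * (δ / 2 / 2 ^ p) := this
          _ = δ / 2 := by field_simp
      have hDC : D μ p Γ₀ ≤ D μ p C := hΓ₀min C ⟨z, hzC⟩ hCcard
      have hmd : m + δ = D μ p Γ₀ := by rw [hδdef]; ring
      rw [← hm] at hD
      linarith

end QuantAux

open MeasureTheory Metric

/-- Existence of an `L^p` optimal quantizer at each level `N ≥ 1`. -/
theorem optimal_quantizer_exists {d : ℕ}
    (μ : Measure (EuclideanSpace ℝ (Fin d))) [IsProbabilityMeasure μ]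
    (p : ℝ) (hp : 1 ≤ p)
    (hmom : Integrable (fun y => ‖y‖ ^ p) μ)
    (N : ℕ) (hN : 1 ≤ N) :
    ∃ Γ : Finset (EuclideanSpace ℝ (Fin d)), Γ.Nonempty ∧ Γ.card ≤ N ∧
      (∫ y, Metric.infDist y (Γ : Set (EuclideanSpace ℝ (Fin d))) ^ p ∂μ) ^ (1 / p) =
        quantError μ p N := by
  obtain ⟨Γs, hne, hcard, hmin⟩ := QuantAux.keyP (μ := μ) (p := p) hp hmom N hN
  refine ⟨Γs, hne, hcard, ?_⟩
  unfold quantError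
  have hbdd : BddBelow { e : ℝ | ∃ Γ : Finset (EuclideanSpace ℝ (Fin d)),
      Γ.Nonempty ∧ Γ.card ≤ N ∧
      e = (∫ y, Metric.infDist y (Γ : Set (EuclideanSpace ℝ (Fin d))) ^ p ∂μ) ^ (1 / p) } := by
    refine ⟨0, ?_⟩
    rintro e ⟨Γ, -, -, rfl⟩
    exact Real.rpow_nonneg
      (integral_nonneg fun y => Real.rpow_nonneg infDist_nonneg p) _
  apply le_antisymm
  · refine le_csInf ⟨_, Γs, hne, hcard, rfl⟩ ?_
    rintro e ⟨Γ, h1, h2, rfl⟩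
    refine Real.rpow_le_rpow
      (integral_nonneg fun y => Real.rpow_nonneg infDist_nonneg p)
      (hmin Γ h1 h2) ?_
    positivity
  · exact csInf_le hbdd ⟨Γs, hne, hcard, rfl⟩
end

section
/- If V: ℝ^d → ℝ is differentiable with K-Lipschitz gradient, E ∈ L²(ℝ^d), and Ê* is a stationary quantizer of E (E[E | Ê*] = Ê*), then |E[V(E)] - E[V(Ê*)]| ≤ (K/2) · E[|E - Ê*|²]. -/
open MeasureTheory

lemma taylor_lip {F : Type*} [NormedAddCommGroup F] [InnerProductSpace ℝ F] [CompleteSpace F]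
    {K : NNReal} {V : F → ℝ} {V' : F → F}
    (hV : ∀ x, HasGradientAt V (V' x) x) (hV' : LipschitzWith K V')
    (x y : F) :
    |V x - V y - inner ℝ (V' y) (x - y)| ≤ (K : ℝ) / 2 * ‖x - y‖ ^ 2 := by
  set p : ℝ → F := fun t => y + t • (x - y) with hp
  have hderiv : ∀ t : ℝ, HasDerivAt (fun t => V (p t))
      (inner ℝ (V' (p t)) (x - y) : ℝ) t := by
    intro t
    have hpath : HasDerivAt p (x - y) t := by
      have : HasDerivAt (fun s : ℝ => s • (x - y)) ((1 : ℝ) • (x - y)) t :=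
        (hasDerivAt_id t).smul_const (x - y)
      have h' := this.const_add y
      simp only [one_smul] at h'
      exact h'
    have hVf : HasFDerivAt V (InnerProductSpace.toDual ℝ F (V' (p t))) (p t) :=
      (hV (p t)).hasFDerivAt
    have := hVf.comp_hasDerivAt t hpath
    simp at this
    exact this
  set h : ℝ → ℝ := fun t => V (p t) - t * inner ℝ (V' y) (x - y) with hh
  have hderivh : ∀ t : ℝ, HasDerivAt h
      ((inner ℝ (V' (p t)) (x - y) : ℝ) - inner ℝ (V' y) (x - y)) t := by
    intro t
    have h2 : HasDerivAt (fun t : ℝ => t * inner ℝ (V' y) (x - y)) (inner ℝ (V' y) (x - y) : ℝ) t := by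
      simpa using (hasDerivAt_id t).mul_const (inner ℝ (V' y) (x - y) : ℝ)
    exact (hderiv t).sub h2
  have hcont : Continuous fun t : ℝ => (inner ℝ (V' (p t)) (x - y) : ℝ) - inner ℝ (V' y) (x - y) := by
    have hpcont : Continuous p := by fun_prop
    exact ((continuous_inner.comp ((hV'.continuous.comp hpcont).prodMk continuous_const)).sub
      continuous_const)
  have hint : h 1 - h 0 = ∫ t in (0:ℝ)..1,
      ((inner ℝ (V' (p t)) (x - y) : ℝ) - inner ℝ (V' y) (x - y)) := by
    rw [intervalIntegral.integral_eq_sub_of_hasDerivAt (fun t _ => hderivh t)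
      (hcont.intervalIntegrable 0 1)]
  have hval : h 1 - h 0 = V x - V y - inner ℝ (V' y) (x - y) := by
    simp [hh, hp]; ring
  have hbound : ∀ t ∈ Set.Ioc (0:ℝ) 1,
      ‖(inner ℝ (V' (p t)) (x - y) : ℝ) - inner ℝ (V' y) (x - y)‖ ≤ (K : ℝ) * ‖x - y‖ ^ 2 * t := by
    intro t ht
    rw [← inner_sub_left]
    calc ‖(inner ℝ (V' (p t) - V' y) (x - y) : ℝ)‖
        ≤ ‖V' (p t) - V' y‖ * ‖x - y‖ := norm_inner_le_norm _ _
      _ ≤ (K : ℝ) * ‖p t - y‖ * ‖x - y‖ := by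
          gcongr
          exact hV'.norm_sub_le _ _
      _ = (K : ℝ) * ‖x - y‖ ^ 2 * t := by
          have : p t - y = t • (x - y) := by simp [hp]
          rw [this, norm_smul]
          simp [Real.norm_eq_abs, abs_of_pos ht.1]
          ring
  calc |V x - V y - inner ℝ (V' y) (x - y)|
      = ‖∫ t in (0:ℝ)..1, ((inner ℝ (V' (p t)) (x - y) : ℝ) - inner ℝ (V' y) (x - y))‖ := by
        rw [← hint, hval.symm]; rfl
    _ ≤ |∫ t in (0:ℝ)..1, (K : ℝ) * ‖x - y‖ ^ 2 * t| := by
        apply intervalIntegral.norm_integral_le_abs_of_norm_le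
        · filter_upwards [ae_restrict_mem measurableSet_Ioc] with t ht
          exact hbound t (by simpa [Set.uIoc_of_le (zero_le_one' ℝ)] using ht)
        · exact (continuous_const.mul continuous_id).intervalIntegrable 0 1
    _ = (K : ℝ) / 2 * ‖x - y‖ ^ 2 := by
        rw [intervalIntegral.integral_const_mul, integral_id]
        rw [abs_of_nonneg (by positivity)]
        ring

/-- Second-order cubature error bound for a stationary quantizer, for `V` with
Lipschitz gradient. -/
theorem stationary_quantizer_second_order_bound {d : ℕ} {Ω : Type*} [MeasureSpace Ω]
    (P : Measure Ω) [IsProbabilityMeasure P]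
    (X Xq : Ω → EuclideanSpace ℝ (Fin d))
    (hX2 : Integrable (fun ω => ‖X ω‖ ^ 2) P) (hXint : Integrable X P)
    (hfin : (Set.range Xq).Finite)
    (hXqmeas : Measurable Xq)
    (hstat : P[X | MeasurableSpace.comap Xq inferInstance] =ᵐ[P] Xq)
    (K : NNReal) (V : EuclideanSpace ℝ (Fin d) → ℝ)
    (V' : EuclideanSpace ℝ (Fin d) → EuclideanSpace ℝ (Fin d))
    (hV : ∀ x, HasGradientAt V (V' x) x) (hV' : LipschitzWith K V')
    (hVX : Integrable (fun ω => V (X ω)) P)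
    (hVXq : Integrable (fun ω => V (Xq ω)) P)
    (hd2 : Integrable (fun ω => ‖X ω - Xq ω‖ ^ 2) P) :
    |(∫ ω, V (X ω) ∂P) - ∫ ω, V (Xq ω) ∂P| ≤
      (K : ℝ) / 2 * ∫ ω, ‖X ω - Xq ω‖ ^ 2 ∂P := by
  have hm : MeasurableSpace.comap Xq inferInstance
      ≤ (MeasureSpace.toMeasurableSpace : MeasurableSpace Ω) := hXqmeas.comap_le
  haveI : SigmaFinite (P.trim hm) := by
    haveI : IsFiniteMeasure (P.trim hm) := isFiniteMeasure_trim hm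
    infer_instance
  -- bound on ‖Xq‖
  obtain ⟨C, hC⟩ : ∃ C : ℝ, ∀ ω, ‖Xq ω‖ ≤ C := by
    obtain ⟨C, hC⟩ := (hfin.image (‖·‖)).bddAbove
    exact ⟨C, fun ω => hC ⟨Xq ω, Set.mem_range_self ω, rfl⟩⟩
  have hXqaesm : AEStronglyMeasurable Xq P := hXqmeas.aestronglyMeasurable
  have hXqint : Integrable Xq P := by
    refine Integrable.mono' (integrable_const C) hXqaesm ?_
    exact Filter.Eventually.of_forall hC
  -- bound on ‖V' ∘ Xq‖
  obtain ⟨D, hD⟩ : ∃ D : ℝ, ∀ ω, ‖V' (Xq ω)‖ ≤ D := by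
    obtain ⟨D, hD⟩ := ((hfin.image V').image (‖·‖)).bddAbove
    exact ⟨D, fun ω => hD ⟨V' (Xq ω), ⟨Xq ω, Set.mem_range_self ω, rfl⟩, rfl⟩⟩
  have hYint : Integrable (fun ω => X ω - Xq ω) P := hXint.sub hXqint
  set G : Ω → ℝ := fun ω => (inner ℝ (V' (Xq ω)) (X ω - Xq ω) : ℝ) with hGdef
  have hGaesm : AEStronglyMeasurable G P := by
    exact AEStronglyMeasurable.inner
      ((hV'.continuous.measurable.comp hXqmeas).aestronglyMeasurable) hYint.1
  have hGint : Integrable G P := by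
    refine Integrable.mono' (hYint.norm.const_mul D) hGaesm ?_
    refine Filter.Eventually.of_forall fun ω => ?_
    calc ‖G ω‖ ≤ ‖V' (Xq ω)‖ * ‖X ω - Xq ω‖ := norm_inner_le_norm _ _
      _ ≤ D * ‖X ω - Xq ω‖ :=
          mul_le_mul_of_nonneg_right (hD ω) (norm_nonneg _)
  -- the sets
  set s : Finset (EuclideanSpace ℝ (Fin d)) := hfin.toFinset with hsdef
  set A : EuclideanSpace ℝ (Fin d) → Set Ω := fun v => Xq ⁻¹' {v} with hAdef
  have hAm : ∀ v, MeasurableSet[MeasurableSpace.comap Xq inferInstance] (A v) := fun v =>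
    ⟨{v}, measurableSet_singleton v, rfl⟩
  have hAmeas : ∀ v, MeasurableSet (A v) := fun v => hm _ (hAm v)
  have hAdisj : (↑s : Set (EuclideanSpace ℝ (Fin d))).Pairwise (Function.onFun Disjoint A) := by
    intro u hu v hv huv
    refine Set.disjoint_left.2 fun ω hωu hωv => huv ?_
    simp only [hAdef, Set.mem_preimage, Set.mem_singleton_iff] at hωu hωv
    rw [← hωu, ← hωv]
  have hAcover : (⋃ v ∈ s, A v) = Set.univ := by
    ext ω
    simp only [Set.mem_iUnion, Set.mem_univ, iff_true, hAdef, Set.mem_preimage,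
      Set.mem_singleton_iff]
    exact ⟨Xq ω, by simp [hsdef], rfl⟩
  -- key : set integral of X - Xq over A v vanishes
  have hkey : ∀ v, ∫ ω in A v, (X ω - Xq ω) ∂P = 0 := by
    intro v
    have h1 : ∫ ω in A v, X ω ∂P
        = ∫ ω in A v, (P[X|MeasurableSpace.comap Xq inferInstance]) ω ∂P :=
      (setIntegral_condExp hm hXint (hAm v)).symm
    have h2 : ∫ ω in A v, (P[X|MeasurableSpace.comap Xq inferInstance]) ω ∂P
        = ∫ ω in A v, Xq ω ∂P :=
      integral_congr_ae (ae_restrict_of_ae hstat)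
    rw [integral_sub hXint.integrableOn hXqint.integrableOn, h1, h2, sub_self]
  -- integral of G vanishes
  have hGzero : ∫ ω, G ω ∂P = 0 := by
    have hrw : ∫ ω, G ω ∂P = ∫ ω in ⋃ v ∈ s, A v, G ω ∂P := by
      rw [hAcover, setIntegral_univ]
    rw [hrw, integral_biUnion_finset s (fun v _ => hAmeas v) hAdisj
      (fun v _ => hGint.integrableOn)]
    refine Finset.sum_eq_zero fun v _ => ?_
    have hcongr : ∫ ω in A v, G ω ∂P = ∫ ω in A v, (inner ℝ (V' v) (X ω - Xq ω) : ℝ) ∂P := by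
      refine setIntegral_congr_fun (hAmeas v) fun ω hω => ?_
      simp only [hAdef, Set.mem_preimage, Set.mem_singleton_iff] at hω
      simp [hGdef, hω]
    rw [hcongr, integral_inner hYint.integrableOn, hkey v, inner_zero_right]
  -- assembly
  have hfg : Integrable (fun ω => V (X ω) - V (Xq ω)) P := hVX.sub hVXq
  have heq : (∫ ω, V (X ω) ∂P) - ∫ ω, V (Xq ω) ∂P
      = ∫ ω, (V (X ω) - V (Xq ω) - G ω) ∂P := by
    rw [integral_sub hfg hGint, integral_sub hVX hVXq, hGzero, sub_zero]
  rw [heq]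
  calc |∫ ω, (V (X ω) - V (Xq ω) - G ω) ∂P|
      ≤ ∫ ω, |V (X ω) - V (Xq ω) - G ω| ∂P := by
        simpa [Real.norm_eq_abs] using
          norm_integral_le_integral_norm (μ := P) (fun ω => V (X ω) - V (Xq ω) - G ω)
    _ ≤ ∫ ω, (K : ℝ) / 2 * ‖X ω - Xq ω‖ ^ 2 ∂P := by
        refine integral_mono (hfg.sub hGint).abs (hd2.const_mul _) fun ω => ?_
        exact taylor_lip hV hV' (X ω) (Xq ω)
    _ = (K : ℝ) / 2 * ∫ ω, ‖X ω - Xq ω‖ ^ 2 ∂P := integral_const_mul _ _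
end

section
/- In the finite-horizon MDP with finite action set and bounded costs, any policy defined by selecting, at each (n,x), a minimizer ũ*(n,x) ∈ argmin_{ν ∈ U} { Ψ(x,ν) + E[V(n+1, T(n,x,ν,E))] } is optimal: J(n, x, u*) = V(n, x) for all n and x. -/
open MeasureTheory

variable {𝒳 ℰ U : Type*}

/-- Cost-to-go of a Markov policy, with `k` steps to go before the horizon `N`:
the expected aggregated cost obtained by integrating out the i.i.d. noise. -/
noncomputable def costAux [MeasurableSpace ℰ] (N : ℕ) (T : ℕ → 𝒳 → U → ℰ → 𝒳)
    (ν : Measure ℰ) (Ψ : 𝒳 → U → ℝ) (Φ : 𝒳 → ℝ) (π : ℕ → 𝒳 → U) :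
    ℕ → 𝒳 → ℝ
  | 0, x => Φ x
  | (k + 1), x =>
      Ψ x (π (N - (k + 1)) x) +
        ∫ e, costAux N T ν Ψ Φ π k (T (N - (k + 1)) x (π (N - (k + 1)) x) e) ∂ν

/-- Expected aggregated cost `J(n, x, π)` of policy `π` started at time `n` in state `x`. -/
noncomputable def costJ [MeasurableSpace ℰ] (N : ℕ) (T : ℕ → 𝒳 → U → ℰ → 𝒳)
    (ν : Measure ℰ) (Ψ : 𝒳 → U → ℝ) (Φ : 𝒳 → ℝ) (π : ℕ → 𝒳 → U)
    (n : ℕ) (x : 𝒳) : ℝ :=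
  costAux N T ν Ψ Φ π (N - n) x

/-- Value function: infimum of the expected aggregated cost over measurable
Markov policies. -/
noncomputable def valueV [MeasurableSpace 𝒳] [MeasurableSpace U] [MeasurableSpace ℰ]
    (N : ℕ) (T : ℕ → 𝒳 → U → ℰ → 𝒳) (ν : Measure ℰ) (Ψ : 𝒳 → U → ℝ) (Φ : 𝒳 → ℝ)
    (n : ℕ) (x : 𝒳) : ℝ :=
  ⨅ π : { p : ℕ → 𝒳 → U // ∀ k, Measurable (p k) },
    costJ N T ν Ψ Φ (π : ℕ → 𝒳 → U) n x


/-- A policy selecting, at each `(n, x)`, a minimizer of the Bellman one-step cost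
is optimal: its expected aggregated cost equals the value function everywhere. -/
theorem bellman_minimizer_policy_optimal [MeasurableSpace 𝒳] [MeasurableSpace ℰ]
    [MeasurableSpace U] [Fintype U] [Nonempty U] [MeasurableSingletonClass U]
    (N : ℕ) (T : ℕ → 𝒳 → U → ℰ → 𝒳)
    (hT : ∀ n u, Measurable (fun p : 𝒳 × ℰ => T n p.1 u p.2))
    (ν : Measure ℰ) [IsProbabilityMeasure ν]
    (Ψ : 𝒳 → U → ℝ) (Φ : 𝒳 → ℝ)
    (hΨmeas : ∀ u, Measurable (fun x => Ψ x u)) (hΦmeas : Measurable Φ)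
    (CΨ CΦ : ℝ) (hΨbd : ∀ x u, |Ψ x u| ≤ CΨ) (hΦbd : ∀ x, |Φ x| ≤ CΦ)
    (ustar : ℕ → 𝒳 → U) (hmeas : ∀ n, Measurable (ustar n))
    (hmin : ∀ n x, ∀ u : U,
      Ψ x (ustar n x) + ∫ e, valueV N T ν Ψ Φ (n + 1) (T n x (ustar n x) e) ∂ν ≤
        Ψ x u + ∫ e, valueV N T ν Ψ Φ (n + 1) (T n x u e) ∂ν) :
    ∀ n x, costJ N T ν Ψ Φ ustar n x = valueV N T ν Ψ Φ n x := by
  intro n₀ x₀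
  have hCΨ : 0 ≤ CΨ := le_trans (abs_nonneg _) (hΨbd x₀ (Classical.arbitrary U))
  have hCΦ : 0 ≤ CΦ := le_trans (abs_nonneg _) (hΦbd x₀)
  haveI hne : Nonempty { p : ℕ → 𝒳 → U // ∀ k, Measurable (p k) } :=
    ⟨⟨fun _ _ => Classical.arbitrary U, fun _ => measurable_const⟩⟩
  -- boundedness of costAux
  have hbd : ∀ (π : ℕ → 𝒳 → U) (k : ℕ) (x : 𝒳),
      |costAux N T ν Ψ Φ π k x| ≤ k * CΨ + CΦ := by
    intro π k
    induction k with
    | zero => intro x; simpa [costAux] using hΦbd x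
    | succ k ih =>
      intro x
      have hI : ‖∫ e, costAux N T ν Ψ Φ π k (T (N - (k + 1)) x (π (N - (k + 1)) x) e) ∂ν‖ ≤
          (k * CΨ + CΦ) * (ν Set.univ).toReal := by
        apply norm_integral_le_of_norm_le_const
        exact Filter.Eventually.of_forall fun e => by
          rw [Real.norm_eq_abs]; exact ih _
      rw [measure_univ, ENNReal.toReal_one, mul_one, Real.norm_eq_abs] at hI
      calc |costAux N T ν Ψ Φ π (k + 1) x|
          ≤ |Ψ x (π (N - (k + 1)) x)| +
            |∫ e, costAux N T ν Ψ Φ π k (T (N - (k + 1)) x (π (N - (k + 1)) x) e) ∂ν| := by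
            simpa [costAux] using abs_add_le _ _
        _ ≤ CΨ + (k * CΨ + CΦ) := add_le_add (hΨbd _ _) hI
        _ = (k + 1 : ℕ) * CΨ + CΦ := by push_cast; ring
  -- measurability of costAux
  have hmeasC : ∀ (π : ℕ → 𝒳 → U), (∀ k, Measurable (π k)) → ∀ k,
      Measurable (costAux N T ν Ψ Φ π k) := by
    intro π hπ k
    induction k with
    | zero => simpa [costAux] using hΦmeas
    | succ k ih =>
      have hΨ2 : Measurable (fun p : 𝒳 × U => Ψ p.1 p.2) :=
        measurable_from_prod_countable_left fun u => hΨmeas u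
      have h1 : Measurable fun x => Ψ x (π (N - (k + 1)) x) :=
        hΨ2.comp (measurable_id.prodMk (hπ _))
      have hT2 : Measurable (fun q : (𝒳 × ℰ) × U => T (N - (k + 1)) q.1.1 q.2 q.1.2) :=
        measurable_from_prod_countable_left fun u => hT _ u
      have hTx : Measurable (fun p : 𝒳 × ℰ =>
          T (N - (k + 1)) p.1 (π (N - (k + 1)) p.1) p.2) :=
        hT2.comp (measurable_id.prodMk ((hπ _).comp measurable_fst))
      have hg : StronglyMeasurable (fun p : 𝒳 × ℰ =>
          costAux N T ν Ψ Φ π k (T (N - (k + 1)) p.1 (π (N - (k + 1)) p.1) p.2)) :=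
        (ih.comp hTx).stronglyMeasurable
      have h2 : StronglyMeasurable (fun x : 𝒳 =>
          ∫ e, costAux N T ν Ψ Φ π k (T (N - (k + 1)) x (π (N - (k + 1)) x) e) ∂ν) :=
        hg.integral_prod_right'
      exact h1.add h2.measurable
  -- integrability of the one-step composition
  have hint : ∀ (π : ℕ → 𝒳 → U), (∀ k, Measurable (π k)) → ∀ (k m : ℕ) (x : 𝒳) (u : U),
      Integrable (fun e => costAux N T ν Ψ Φ π k (T m x u e)) ν := by
    intro π hπ k m x u
    have hm : Measurable fun e => costAux N T ν Ψ Φ π k (T m x u e) :=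
      (hmeasC π hπ k).comp ((hT m u).comp measurable_prodMk_left)
    refine (integrable_const (k * CΨ + CΦ)).mono' hm.aestronglyMeasurable ?_
    exact Filter.Eventually.of_forall fun e => by
      rw [Real.norm_eq_abs]; exact hbd π k _
  -- bddBelow of the ranges
  have hbdd : ∀ (k : ℕ) (x : 𝒳),
      BddBelow (Set.range fun π : { p : ℕ → 𝒳 → U // ∀ k, Measurable (p k) } =>
        costAux N T ν Ψ Φ (π : ℕ → 𝒳 → U) k x) := by
    intro k x
    refine ⟨-(k * CΨ + CΦ), ?_⟩
    rintro _ ⟨π, rfl⟩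
    exact neg_le_of_abs_le (hbd π k x)
  -- main induction
  have key : ∀ k, k ≤ N → ∀ x : 𝒳, costAux N T ν Ψ Φ ustar k x =
      ⨅ π : { p : ℕ → 𝒳 → U // ∀ k, Measurable (p k) },
        costAux N T ν Ψ Φ (π : ℕ → 𝒳 → U) k x := by
    intro k
    induction k with
    | zero =>
      intro _ x
      simp only [costAux]
      exact (ciInf_const).symm
    | succ k ih =>
      intro hk x
      have hkN : k ≤ N := Nat.le_of_succ_le hk
      have hsub : N - (N - (k + 1) + 1) = k := by omega
      have hV : ∀ y : 𝒳, valueV N T ν Ψ Φ (N - (k + 1) + 1) y = costAux N T ν Ψ Φ ustar k y := by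
        intro y
        rw [ih hkN y]
        simp only [valueV, costJ, hsub]
      have hVle : ∀ (π : ℕ → 𝒳 → U), (∀ m, Measurable (π m)) → ∀ y : 𝒳,
          costAux N T ν Ψ Φ ustar k y ≤ costAux N T ν Ψ Φ π k y := by
        intro π hπ y
        rw [ih hkN y]
        exact ciInf_le (hbdd k y) ⟨π, hπ⟩
      refine le_antisymm (le_ciInf fun π => ?_) (ciInf_le (hbdd (k + 1) x) ⟨ustar, hmeas⟩)
      obtain ⟨π, hπ⟩ := π
      simp only [costAux]
      calc Ψ x (ustar (N - (k + 1)) x) +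
            ∫ e, costAux N T ν Ψ Φ ustar k (T (N - (k + 1)) x (ustar (N - (k + 1)) x) e) ∂ν
          = Ψ x (ustar (N - (k + 1)) x) +
            ∫ e, valueV N T ν Ψ Φ (N - (k + 1) + 1)
              (T (N - (k + 1)) x (ustar (N - (k + 1)) x) e) ∂ν := by
            congr 1; exact integral_congr_ae (Filter.Eventually.of_forall fun e => (hV _).symm)
        _ ≤ Ψ x (π (N - (k + 1)) x) +
            ∫ e, valueV N T ν Ψ Φ (N - (k + 1) + 1)
              (T (N - (k + 1)) x (π (N - (k + 1)) x) e) ∂ν :=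
            hmin (N - (k + 1)) x (π (N - (k + 1)) x)
        _ = Ψ x (π (N - (k + 1)) x) +
            ∫ e, costAux N T ν Ψ Φ ustar k (T (N - (k + 1)) x (π (N - (k + 1)) x) e) ∂ν := by
            congr 1; exact integral_congr_ae (Filter.Eventually.of_forall fun e => hV _)
        _ ≤ Ψ x (π (N - (k + 1)) x) +
            ∫ e, costAux N T ν Ψ Φ π k (T (N - (k + 1)) x (π (N - (k + 1)) x) e) ∂ν := by
            refine add_le_add_right ?_ _
            exact integral_mono (hint ustar hmeas k _ x _) (hint π hπ k _ x _)
              fun e => hVle π hπ _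
  exact key (N - n₀) (Nat.sub_le N n₀) x₀
end
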